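/- arXiv:1209.4337 — 8 statements merged into one kernel-verified Lean document; each statement's English description precedes it below -/
import Mathlib

section
/- For every ε > 0 and β > 0 there exist constants C > 0 and T₀ ∈ (0,1) such that for every 0 < T ≤ T₀ there is a measurable set Ω_T ⊆ Ω with P(Ω ∖ Ω_T) < exp(−1/T^β), and such that for every ω ∈ Ω_T and every integer n ≥ 1: |g_n(ω)| ≤ C T^{−β/2} (1 + n)^ε. -/
open MeasureTheory ProbabilityTheory Real Set

lemma aux_int_exp {c : ℝ} (hc : 0 < c) (b : ℝ) :
    ∫ x in Set.Ioi b, Real.exp (-c * x) = Real.exp (-c * b) / c := by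
  have hderiv : ∀ x ∈ Set.Ici b,
      HasDerivAt (fun y => -Real.exp (-c * y) / c) (Real.exp (-c * x)) x := by
    intro x _
    have h1 : HasDerivAt (fun y : ℝ => -c * y) (-c) x := by
      simpa using (hasDerivAt_id x).const_mul (-c)
    have h2 := (h1.exp.neg).div_const c
    refine h2.congr_deriv ?_
    field_simp [hc.ne']
  have htend : Filter.Tendsto (fun y => -Real.exp (-c * y) / c) Filter.atTop (nhds 0) := by
    have : Filter.Tendsto (fun y : ℝ => Real.exp (-c * y)) Filter.atTop (nhds 0) :=
      Real.tendsto_exp_atBot.comp (Filter.tendsto_id.const_mul_atTop_of_neg (by linarith))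
    simpa using (this.neg.div_const c)
  have := integral_Ioi_of_hasDerivAt_of_tendsto' hderiv (exp_neg_integrableOn_Ioi b hc) htend
  rw [this]
  field_simp
  ring

lemma pdf_eq (x : ℝ) : gaussianPDFReal 0 (1/2) x = (Real.sqrt π)⁻¹ * Real.exp (-x^2) := by
  rw [gaussianPDFReal]
  norm_num
  rw [mul_comm (√2), mul_assoc, inv_mul_cancel₀ (by positivity), mul_one]

lemma gauss_Ioi {a : ℝ} (ha : 1 ≤ a) :
    ∫ x in Set.Ioi a, gaussianPDFReal 0 (1/2) x ≤ Real.exp (-a^2) / 2 := by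
  have ha0 : 0 < a := by linarith
  have hint : IntegrableOn (fun x => Real.exp (a^2) * Real.exp (-(2*a) * x)) (Set.Ioi a) :=
    (exp_neg_integrableOn_Ioi a (by linarith)).const_mul _
  have hmono : ∫ x in Set.Ioi a, gaussianPDFReal 0 (1/2) x
      ≤ ∫ x in Set.Ioi a, Real.exp (a^2) * Real.exp (-(2*a) * x) := by
    refine setIntegral_mono_on ((integrable_gaussianPDFReal 0 (1/2)).integrableOn) hint
      measurableSet_Ioi ?_
    intro x _
    rw [pdf_eq]
    have h1 : (Real.sqrt π)⁻¹ ≤ 1 := by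
      rw [inv_le_one_iff₀]
      right
      exact Real.one_le_sqrt.mpr (by linarith [Real.pi_gt_three])
    have h2 : Real.exp (-x^2) ≤ Real.exp (a^2) * Real.exp (-(2*a)*x) := by
      rw [← Real.exp_add]
      exact Real.exp_le_exp.mpr (by nlinarith [sq_nonneg (x - a)])
    calc (Real.sqrt π)⁻¹ * Real.exp (-x^2) ≤ 1 * Real.exp (-x^2) := by
          exact mul_le_mul_of_nonneg_right h1 (Real.exp_nonneg _)
      _ = Real.exp (-x^2) := one_mul _
      _ ≤ _ := h2
  have hcomp : ∫ x in Set.Ioi a, Real.exp (a^2) * Real.exp (-(2*a) * x)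
      = Real.exp (a^2) * (Real.exp (-(2*a) * a) / (2*a)) := by
    rw [integral_const_mul, aux_int_exp (by linarith)]
  rw [hcomp] at hmono
  refine hmono.trans ?_
  have he : Real.exp (a^2) * Real.exp (-(2*a)*a) = Real.exp (-a^2) := by
    rw [← Real.exp_add]; ring_nf
  calc Real.exp (a^2) * (Real.exp (-(2*a)*a) / (2*a))
      = (Real.exp (a^2) * Real.exp (-(2*a)*a)) / (2*a) := by ring
    _ = Real.exp (-a^2) / (2*a) := by rw [he]
    _ ≤ Real.exp (-a^2) / 2 := by
        gcongr
        linarith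

lemma gauss_tail {a : ℝ} (ha : 1 ≤ a) :
    gaussianReal 0 (1/2) {x : ℝ | a ≤ |x|} ≤ ENNReal.ofReal (Real.exp (-a^2)) := by
  have hv : (1/2 : NNReal) ≠ 0 := by norm_num
  have hsub : {x : ℝ | a ≤ |x|} ⊆ Set.Iic (-a) ∪ Set.Ici a := by
    intro x hx
    rcases le_abs.mp (Set.mem_setOf_eq ▸ hx) with h1 | h1
    · exact Or.inr h1
    · exact Or.inl (by simp only [Set.mem_Iic]; linarith)
  have hIci : gaussianReal 0 (1/2) (Set.Ici a) ≤ ENNReal.ofReal (Real.exp (-a^2) / 2) := by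
    rw [gaussianReal_apply_eq_integral 0 hv, integral_Ici_eq_integral_Ioi]
    exact ENNReal.ofReal_le_ofReal (gauss_Ioi ha)
  have hIic : gaussianReal 0 (1/2) (Set.Iic (-a)) ≤ ENNReal.ofReal (Real.exp (-a^2) / 2) := by
    rw [gaussianReal_apply_eq_integral 0 hv]
    have heq : ∫ x in Set.Iic (-a), gaussianPDFReal 0 (1/2) x
        = ∫ x in Set.Ioi a, gaussianPDFReal 0 (1/2) x := by
      rw [← integral_comp_neg_Ioi]
      simp only [pdf_eq, neg_sq]
    rw [heq]
    exact ENNReal.ofReal_le_ofReal (gauss_Ioi ha)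
  calc gaussianReal 0 (1/2) {x : ℝ | a ≤ |x|}
      ≤ gaussianReal 0 (1/2) (Set.Iic (-a) ∪ Set.Ici a) := measure_mono hsub
    _ ≤ gaussianReal 0 (1/2) (Set.Iic (-a)) + gaussianReal 0 (1/2) (Set.Ici a) :=
        measure_union_le _ _
    _ ≤ ENNReal.ofReal (Real.exp (-a^2) / 2) + ENNReal.ofReal (Real.exp (-a^2) / 2) :=
        add_le_add hIic hIci
    _ = ENNReal.ofReal (Real.exp (-a^2)) := by
        rw [← ENNReal.ofReal_add (by positivity) (by positivity)]
        norm_num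

lemma tail_P {Ω : Type*} [MeasurableSpace Ω] (P : Measure Ω) {X : Ω → ℝ} (hX : Measurable X)
    (hmap : Measure.map X P = gaussianReal 0 (1/2)) {a : ℝ} (ha : 1 ≤ a) :
    P {ω | a ≤ |X ω|} ≤ ENNReal.ofReal (Real.exp (-a^2)) := by
  have hs : MeasurableSet {x : ℝ | a ≤ |x|} :=
    measurableSet_le measurable_const measurable_abs
  have heq : P {ω | a ≤ |X ω|} = Measure.map X P {x | a ≤ |x|} := by
    rw [Measure.map_apply hX hs]
    rfl
  rw [heq, hmap]
  exact gauss_tail ha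

lemma tele_nonneg (n : ℕ) : 0 ≤ ((n:ℝ)+1)⁻¹ - ((n:ℝ)+2)⁻¹ := by
  have h1 : (0:ℝ) < (n:ℝ)+1 := by positivity
  have h2 : (0:ℝ) < (n:ℝ)+2 := by positivity
  rw [sub_nonneg]
  exact inv_anti₀ h1 (by linarith)

lemma tele_hasSum : HasSum (fun n : ℕ => ((n:ℝ)+1)⁻¹ - ((n:ℝ)+2)⁻¹) 1 := by
  rw [hasSum_iff_tendsto_nat_of_nonneg tele_nonneg]
  have hps : ∀ n : ℕ, (∑ i ∈ Finset.range n, (((i:ℝ)+1)⁻¹ - ((i:ℝ)+2)⁻¹))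
      = 1 - ((n:ℝ)+1)⁻¹ := by
    intro n
    have hth := Finset.sum_range_sub' (fun i : ℕ => ((i:ℝ)+1)⁻¹) n
    have h2 : ∀ i ∈ Finset.range n, (((i:ℝ)+1)⁻¹ - ((i:ℝ)+2)⁻¹)
        = (fun i : ℕ => ((i:ℝ)+1)⁻¹) i - (fun i : ℕ => ((i:ℝ)+1)⁻¹) (i+1) := by
      intro i _
      push_cast
      ring_nf
    rw [Finset.sum_congr rfl h2, hth]
    norm_num
  simp only [hps]
  have h0 : Filter.Tendsto (fun n : ℕ => ((n:ℝ)+1)⁻¹) Filter.atTop (nhds 0) := by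
    simpa [one_div] using tendsto_one_div_add_atTop_nhds_zero_nat (𝕜 := ℝ)
  simpa using tendsto_const_nhds.sub h0

set_option maxHeartbeats 1000000 in
/-- **Uniform bound on randomized Fourier coefficients (Lemma: large deviations).**
Let `(g_n)_{n ≥ 1}` with `g_n = h_n + i k_n` be independent standard complex Gaussian random
variables ( `(h_n)`, `(k_n)` mutually independent real Gaussians of mean `0`, variance `1/2`).
For every `ε > 0` and `β > 0` there are `C > 0` and `T₀ ∈ (0,1)` such that for every
`0 < T ≤ T₀` there is a measurable set `Ω_T` with `P(Ω_Tᶜ) < exp(-1/T^β)` and, for all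
`ω ∈ Ω_T` and all `n ≥ 1`, `|g_n(ω)| ≤ C T^{-β/2} (1+n)^ε`. -/
theorem coefficient_bound_large_deviation
    {Ω : Type*} [MeasurableSpace Ω] (P : Measure Ω) [IsProbabilityMeasure P]
    (h k : ℕ → Ω → ℝ)
    (hmeas : ∀ n : ℕ, 1 ≤ n → Measurable (h n) ∧ Measurable (k n))
    (hindep : iIndepFun
      (Sum.elim (fun j : {n : ℕ // 1 ≤ n} => h (j : ℕ))
        (fun j : {n : ℕ // 1 ≤ n} => k (j : ℕ))) P)
    (hgauss : ∀ n : ℕ, 1 ≤ n →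
      Measure.map (h n) P = gaussianReal 0 (1 / 2) ∧
        Measure.map (k n) P = gaussianReal 0 (1 / 2))
    (ε β : ℝ) (hε : 0 < ε) (hβ : 0 < β) :
    ∃ C > 0, ∃ T₀ : ℝ, 0 < T₀ ∧ T₀ < 1 ∧
      ∀ T : ℝ, 0 < T → T ≤ T₀ →
        ∃ ΩT : Set Ω, MeasurableSet ΩT ∧
          P ΩTᶜ < ENNReal.ofReal (Real.exp (-1 / T ^ β)) ∧
          ∀ ω ∈ ΩT, ∀ n : ℕ, 1 ≤ n →
            ‖(h n ω : ℂ) + (k n ω : ℂ) * Complex.I‖ ≤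
              C * T ^ (-(β / 2)) * (1 + (n : ℝ)) ^ ε := by
  refine ⟨4, by norm_num, ?_⟩
  set K : ℝ := max 1 (1/(4*ε)) with hKdef
  have hK1 : 1 ≤ K := le_max_left _ _
  have hK0 : 0 < K := lt_of_lt_of_le one_pos hK1
  refine ⟨min (1/2) (K ^ (-(1/β))), lt_min (by norm_num) (Real.rpow_pos_of_pos hK0 _),
    lt_of_le_of_lt (min_le_left _ _) (by norm_num), ?_⟩
  intro T hT hTT₀
  set M : ℝ := T ^ (-β) with hMdef
  have hThalf : T ≤ 1/2 := le_trans hTT₀ (min_le_left _ _)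
  have hM1 : 1 ≤ M :=
    Real.one_le_rpow_of_pos_of_le_one_of_nonpos hT (by linarith) (by linarith)
  have hM0 : 0 ≤ M := by linarith
  have hMK : K ≤ M := by
    have h1 : (min (1/2) (K ^ (-(1/β)))) ^ (-β) ≤ T ^ (-β) :=
      Real.rpow_le_rpow_of_nonpos hT hTT₀ (by linarith)
    have h2 : (K ^ (-(1/β))) ^ (-β) ≤ (min (1/2) (K ^ (-(1/β)))) ^ (-β) :=
      Real.rpow_le_rpow_of_nonpos (lt_min (by norm_num) (Real.rpow_pos_of_pos hK0 _))
        (min_le_right _ _) (by linarith)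
    have h3 : (K ^ (-(1/β))) ^ (-β) = K := by
      rw [← Real.rpow_mul hK0.le]
      rw [show (-(1/β)) * (-β) = 1 by field_simp, Real.rpow_one]
    rw [h3] at h2
    exact le_trans h2 h1
  have hM4ε : 1/(4*ε) ≤ M := le_trans (le_max_right _ _) hMK
  set u : ℝ := T ^ (-(β/2)) with hudef
  have hu1 : 1 ≤ u :=
    Real.one_le_rpow_of_pos_of_le_one_of_nonpos hT (by linarith) (by linarith)
  have huu : u * u = M := by
    rw [hudef, hMdef, ← Real.rpow_add hT]
    congr 1
    ring
  set a : ℕ → ℝ := fun j => 2 * u * ((j:ℝ)+2)^ε with hadef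
  have ha1 : ∀ j : ℕ, 1 ≤ a j := by
    intro j
    have h1 : (1:ℝ) ≤ ((j:ℝ)+2)^ε := by
      have hj : (1:ℝ) ≤ (j:ℝ)+2 := by
        have := Nat.cast_nonneg (α := ℝ) j
        linarith
      have := Real.rpow_le_rpow (by norm_num) hj hε.le
      rwa [Real.one_rpow] at this
    simp only [hadef]
    nlinarith [mul_le_mul hu1 h1 (by norm_num : (0:ℝ) ≤ 1) (by linarith : (0:ℝ) ≤ u)]
  set E : ℕ → Set Ω := fun j =>
    {ω | a j ≤ |h (j+1) ω|} ∪ {ω | a j ≤ |k (j+1) ω|} with hEdef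
  have hEmeas : ∀ j, MeasurableSet (E j) := by
    intro j
    exact (measurableSet_le measurable_const ((hmeas (j+1) (by omega)).1.abs)).union
      (measurableSet_le measurable_const ((hmeas (j+1) (by omega)).2.abs))
  refine ⟨(⋃ j, E j)ᶜ, (MeasurableSet.iUnion hEmeas).compl, ?_, ?_⟩
  · -- measure bound
    rw [compl_compl]
    have hPE : ∀ j, P (E j) ≤ ENNReal.ofReal (2 * Real.exp (-(a j)^2)) := by
      intro j
      have h1 := tail_P P (hmeas (j+1) (by omega)).1 (hgauss (j+1) (by omega)).1 (ha1 j)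
      have h2 := tail_P P (hmeas (j+1) (by omega)).2 (hgauss (j+1) (by omega)).2 (ha1 j)
      calc P (E j) ≤ P {ω | a j ≤ |h (j+1) ω|} + P {ω | a j ≤ |k (j+1) ω|} :=
            measure_union_le _ _
        _ ≤ ENNReal.ofReal (Real.exp (-(a j)^2)) + ENNReal.ofReal (Real.exp (-(a j)^2)) :=
            add_le_add h1 h2
        _ = ENNReal.ofReal (2 * Real.exp (-(a j)^2)) := by
            rw [← ENNReal.ofReal_add (by positivity) (by positivity)]
            ring_nf
    have hterm : ∀ j : ℕ, 2 * Real.exp (-(a j)^2) ≤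
        (2 * Real.exp (-(2*M))) * (((j:ℝ)+1)⁻¹ - ((j:ℝ)+2)⁻¹) := by
      intro j
      set L := Real.log ((j:ℝ)+2) with hLdef
      have hL0 : 0 ≤ L := Real.log_nonneg (by
        have := Nat.cast_nonneg (α := ℝ) j
        linarith)
      have hKge : 1 + 2*ε*L ≤ ((j:ℝ)+2)^(2*ε) := by
        rw [Real.rpow_def_of_pos (by positivity)]
        calc 1 + 2*ε*L ≤ Real.exp (2*ε*L) := by
              linarith [Real.add_one_le_exp (2*ε*L)]
          _ = Real.exp (L * (2*ε)) := by ring_nf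
      have ha2 : (a j)^2 = 4 * M * ((j:ℝ)+2)^(2*ε) := by
        have hvv : ((j:ℝ)+2)^ε * ((j:ℝ)+2)^ε = ((j:ℝ)+2)^(2*ε) := by
          rw [← Real.rpow_add (by positivity)]
          ring_nf
        calc (a j)^2 = (u*u) * (((j:ℝ)+2)^ε * ((j:ℝ)+2)^ε) * 4 := by
              simp only [hadef]; ring
          _ = 4 * M * ((j:ℝ)+2)^(2*ε) := by rw [huu, hvv]; ring
      have hexp2L : Real.exp (-(2*L)) = (((j:ℝ)+2) * ((j:ℝ)+2))⁻¹ := by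
        rw [show -(2*L) = -(L+L) by ring, Real.exp_neg, Real.exp_add,
          Real.exp_log (by positivity)]
      have hile : (((j:ℝ)+2) * ((j:ℝ)+2))⁻¹ ≤ ((j:ℝ)+1)⁻¹ - ((j:ℝ)+2)⁻¹ := by
        have hne : ((j:ℝ)+1)⁻¹ - ((j:ℝ)+2)⁻¹ = (((j:ℝ)+1) * ((j:ℝ)+2))⁻¹ := by
          have hj1 : ((j:ℝ)+1) ≠ 0 := by positivity
          have hj2 : ((j:ℝ)+2) ≠ 0 := by positivity
          field_simp <;> ring
        rw [hne]
        apply inv_anti₀ (by positivity)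
        nlinarith [Nat.cast_nonneg (α := ℝ) j]
      have h8 : 2 ≤ 8 * M * ε := by
        rw [div_le_iff₀ (by positivity)] at hM4ε
        nlinarith
      have hmain : 2*M + 2*L ≤ (a j)^2 := by
        rw [ha2]
        nlinarith [mul_le_mul_of_nonneg_left hKge (by linarith : (0:ℝ) ≤ 4*M),
          mul_nonneg (by nlinarith : (0:ℝ) ≤ 8*M*ε - 2) hL0]
      calc 2 * Real.exp (-(a j)^2) ≤ 2 * Real.exp (-(2*M + 2*L)) := by
            gcongr <;> linarith
        _ = (2 * Real.exp (-(2*M))) * Real.exp (-(2*L)) := by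
            rw [show -(2*M+2*L) = -(2*M) + -(2*L) by ring, Real.exp_add]
            ring
        _ ≤ (2 * Real.exp (-(2*M))) * (((j:ℝ)+1)⁻¹ - ((j:ℝ)+2)⁻¹) := by
            rw [hexp2L]
            exact mul_le_mul_of_nonneg_left hile (by positivity)
    have hsum : P (⋃ j, E j) ≤ ENNReal.ofReal (2 * Real.exp (-(2*M))) := by
      calc P (⋃ j, E j) ≤ ∑' j, P (E j) := measure_iUnion_le _
        _ ≤ ∑' j : ℕ, ENNReal.ofReal
            ((2 * Real.exp (-(2*M))) * (((j:ℝ)+1)⁻¹ - ((j:ℝ)+2)⁻¹)) := by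
            apply ENNReal.tsum_le_tsum
            intro j
            exact (hPE j).trans (ENNReal.ofReal_le_ofReal (hterm j))
        _ = ENNReal.ofReal
            (∑' j : ℕ, (2 * Real.exp (-(2*M))) * (((j:ℝ)+1)⁻¹ - ((j:ℝ)+2)⁻¹)) := by
            rw [ENNReal.ofReal_tsum_of_nonneg
              (fun j => mul_nonneg (by positivity) (tele_nonneg j))
              (tele_hasSum.summable.mul_left _)]
        _ = ENNReal.ofReal (2 * Real.exp (-(2*M))) := by
            rw [tsum_mul_left, tele_hasSum.tsum_eq, mul_one]
    refine lt_of_le_of_lt hsum ?_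
    have hmeq : -1 / T ^ β = -M := by
      rw [hMdef, Real.rpow_neg hT.le]
      field_simp
    rw [hmeq]
    rw [ENNReal.ofReal_lt_ofReal_iff (Real.exp_pos _)]
    have h1 : Real.exp (-M) ≤ Real.exp (-1) := Real.exp_le_exp.mpr (by linarith)
    have h2 : Real.exp (-1) < 1/2 := by
      rw [Real.exp_neg]
      have h3 := Real.exp_one_gt_d9
      rw [inv_lt_comm₀ (Real.exp_pos 1) (by norm_num)]
      linarith
    have h4 : 2 * Real.exp (-(2*M)) = 2 * Real.exp (-M) * Real.exp (-M) := by
      rw [show -(2*M) = -M + -M by ring, Real.exp_add]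
      ring
    nlinarith [Real.exp_pos (-M)]
  · -- pointwise bound
    intro ω hω n hn
    obtain ⟨j, rfl⟩ : ∃ j, n = j + 1 := ⟨n - 1, (Nat.succ_pred_eq_of_pos hn).symm⟩
    have hωj : ω ∉ E j := by
      intro hmem
      exact hω (Set.mem_iUnion.mpr ⟨j, hmem⟩)
    rw [hEdef] at hωj
    simp only [Set.mem_union, Set.mem_setOf_eq, not_or, not_le] at hωj
    obtain ⟨hh, hk'⟩ := hωj
    have habs : ‖(h (j+1) ω : ℂ) + (k (j+1) ω : ℂ) * Complex.I‖
        ≤ |h (j+1) ω| + |k (j+1) ω| := by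
      calc ‖(h (j+1) ω : ℂ) + (k (j+1) ω : ℂ) * Complex.I‖
          ≤ ‖(h (j+1) ω : ℂ)‖ + ‖(k (j+1) ω : ℂ) * Complex.I‖ :=
            norm_add_le _ _
        _ = |h (j+1) ω| + |k (j+1) ω| := by
            rw [Complex.norm_real, norm_mul, Complex.norm_real, Complex.norm_I, mul_one,
              Real.norm_eq_abs, Real.norm_eq_abs]
    have hrhs : 4 * T ^ (-(β/2)) * (1 + ((j+1 : ℕ):ℝ)) ^ ε = 2 * a j := by
      have hc : (1 + ((j+1 : ℕ):ℝ)) = ((j:ℝ)+2) := by push_cast; ring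
      rw [hc, hadef]
      ring
    rw [hrhs]
    linarith
end

section
/- Let u : ℝ × ℝ → ℝ be a C^∞ function, 2π-periodic in its first argument, and suppose that for all (x,t): ∂_t u(x,t) + ∂_x³ u(x,t) = ( u(x,t)³ − (1/2π) ∫₀^{2π} u(y,t)³ dy ) · ∂_x u(x,t). Then the function t ↦ (1/2) ∫₀^{2π} (∂_x u(x,t))² dx + (1/20) ∫₀^{2π} u(x,t)⁵ dx is constant on ℝ. -/
open Real MeasureTheory intervalIntegral Function

namespace GKdVAux

lemma contDiff_pd {f : ℝ × ℝ → ℝ} (hf : ContDiff ℝ (⊤ : ℕ∞) f) (v : ℝ × ℝ) :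
    ContDiff ℝ (⊤ : ℕ∞) (fun p => fderiv ℝ f p v) :=
  (hf.fderiv_right (by exact_mod_cast le_top)).clm_apply contDiff_const

lemma hasDerivAt_x {f : ℝ × ℝ → ℝ} (hf : ContDiff ℝ (⊤ : ℕ∞) f) (x t : ℝ) :
    HasDerivAt (fun y => f (y, t)) (fderiv ℝ f (x, t) (1, 0)) x := by
  have h := (hf.differentiable (by simp) (x, t)).hasFDerivAt
  have h2 : HasDerivAt (fun y : ℝ => (y, t)) ((1 : ℝ), (0 : ℝ)) x := by
    simpa using HasDerivAt.prodMk (hasDerivAt_id x) (hasDerivAt_const x t)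
  exact h.comp_hasDerivAt x h2

lemma hasDerivAt_t {f : ℝ × ℝ → ℝ} (hf : ContDiff ℝ (⊤ : ℕ∞) f) (x t : ℝ) :
    HasDerivAt (fun s => f (x, s)) (fderiv ℝ f (x, t) (0, 1)) t := by
  have h := (hf.differentiable (by simp) (x, t)).hasFDerivAt
  have h2 : HasDerivAt (fun s : ℝ => (x, s)) ((0 : ℝ), (1 : ℝ)) t := by
    simpa using HasDerivAt.prodMk (hasDerivAt_const t x) (hasDerivAt_id t)
  exact h.comp_hasDerivAt t h2

lemma mixed_symm {f : ℝ × ℝ → ℝ} (hf : ContDiff ℝ (⊤ : ℕ∞) f) (p : ℝ × ℝ) :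
    fderiv ℝ (fun q => fderiv ℝ f q (1, 0)) p (0, 1) =
      fderiv ℝ (fun q => fderiv ℝ f q (0, 1)) p (1, 0) := by
  have hA : ContDiff ℝ (⊤ : ℕ∞) (fderiv ℝ f) := hf.fderiv_right (by exact_mod_cast le_top)
  have hd : DifferentiableAt ℝ (fderiv ℝ f) p := hA.differentiable (by simp) p
  have key : ∀ v w : ℝ × ℝ,
      fderiv ℝ (fun q => fderiv ℝ f q v) p w = fderiv ℝ (fderiv ℝ f) p w v := by
    intro v w
    rw [fderiv_clm_apply hd (differentiableAt_const v)]
    simp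
  rw [key, key]
  exact second_derivative_symmetric (fun y => (hf.differentiable (by simp) y).hasFDerivAt)
    hd.hasFDerivAt _ _


lemma periodic_deriv {f : ℝ → ℝ} {T : ℝ} (hf : ∀ x, f (x + T) = f x) (x : ℝ) :
    deriv f (x + T) = deriv f x := by
  rw [← deriv_comp_add_const]
  congr 1
  funext y
  exact hf y

end GKdVAux

open GKdVAux

/-- **Conservation of the Hamiltonian for the gauge-transformed quartic gKdV.**
Let `u : ℝ × ℝ → ℝ` be `C^∞`, `2π`-periodic in its first argument, and solve
`∂ₜ u + ∂ₓ³ u = (u³ - (1/2π)∫₀^{2π} u³ dy) ∂ₓ u`.  Then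
`t ↦ (1/2)∫₀^{2π} (∂ₓ u)² dx + (1/20)∫₀^{2π} u⁵ dx` is constant on `ℝ`. -/
theorem hamiltonian_conserved_gauged_gkdv (u : ℝ → ℝ → ℝ)
    (hsmooth : ContDiff ℝ (⊤ : ℕ∞) (Function.uncurry u))
    (hper : ∀ x t : ℝ, u (x + 2 * Real.pi) t = u x t)
    (hPDE : ∀ x t : ℝ,
      deriv (fun s => u x s) t + iteratedDeriv 3 (fun y => u y t) x =
        (u x t ^ 3 - (1 / (2 * Real.pi)) * ∫ y in (0:ℝ)..(2 * Real.pi), u y t ^ 3) *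
          deriv (fun y => u y t) x) :
    ∀ t₁ t₂ : ℝ,
      (1 / 2) * (∫ x in (0:ℝ)..(2 * Real.pi), (deriv (fun y => u y t₁) x) ^ 2) +
          (1 / 20) * (∫ x in (0:ℝ)..(2 * Real.pi), u x t₁ ^ 5) =
        (1 / 2) * (∫ x in (0:ℝ)..(2 * Real.pi), (deriv (fun y => u y t₂) x) ^ 2) +
          (1 / 20) * (∫ x in (0:ℝ)..(2 * Real.pi), u x t₂ ^ 5) := by
  classical
  set U0 : ℝ × ℝ → ℝ := Function.uncurry u with hU0def
  set U1 : ℝ × ℝ → ℝ := fun p => fderiv ℝ U0 p (1, 0) with hU1def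
  set U2 : ℝ × ℝ → ℝ := fun p => fderiv ℝ U1 p (1, 0) with hU2def
  set U3 : ℝ × ℝ → ℝ := fun p => fderiv ℝ U2 p (1, 0) with hU3def
  set U4 : ℝ × ℝ → ℝ := fun p => fderiv ℝ U3 p (1, 0) with hU4def
  set V : ℝ × ℝ → ℝ := fun p => fderiv ℝ U0 p (0, 1) with hVdef
  set W : ℝ × ℝ → ℝ := fun p => fderiv ℝ U1 p (0, 1) with hWdef
  have hU1c : ContDiff ℝ (⊤ : ℕ∞) U1 := contDiff_pd hsmooth _
  have hU2c : ContDiff ℝ (⊤ : ℕ∞) U2 := contDiff_pd hU1c _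
  have hU3c : ContDiff ℝ (⊤ : ℕ∞) U3 := contDiff_pd hU2c _
  have hU4c : ContDiff ℝ (⊤ : ℕ∞) U4 := contDiff_pd hU3c _
  have hVc : ContDiff ℝ (⊤ : ℕ∞) V := contDiff_pd hsmooth _
  have hWc : ContDiff ℝ (⊤ : ℕ∞) W := contDiff_pd hU1c _
  -- spatial derivatives, curried
  have hdx0 : ∀ x t : ℝ, HasDerivAt (fun y => u y t) (U1 (x, t)) x := fun x t =>
    hasDerivAt_x hsmooth x t
  have hdx1 : ∀ x t : ℝ, HasDerivAt (fun y => U1 (y, t)) (U2 (x, t)) x := fun x t =>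
    hasDerivAt_x hU1c x t
  have hdx2 : ∀ x t : ℝ, HasDerivAt (fun y => U2 (y, t)) (U3 (x, t)) x := fun x t =>
    hasDerivAt_x hU2c x t
  have hdx3 : ∀ x t : ℝ, HasDerivAt (fun y => U3 (y, t)) (U4 (x, t)) x := fun x t =>
    hasDerivAt_x hU3c x t
  have hdt0 : ∀ x t : ℝ, HasDerivAt (fun s => u x s) (V (x, t)) t := fun x t =>
    hasDerivAt_t hsmooth x t
  have hdt1 : ∀ x t : ℝ, HasDerivAt (fun s => U1 (x, s)) (W (x, t)) t := fun x t =>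
    hasDerivAt_t hU1c x t
  have e1 : ∀ t : ℝ, deriv (fun y => u y t) = fun y => U1 (y, t) := fun t =>
    funext fun y => (hdx0 y t).deriv
  -- the mean of u³
  set c : ℝ → ℝ := fun t => (1 / (2 * Real.pi)) * ∫ y in (0:ℝ)..(2 * Real.pi), u y t ^ 3
    with hcdef
  -- PDE in terms of V
  have hV : ∀ x t : ℝ, V (x, t) = -U3 (x, t) + (u x t ^ 3 - c t) * U1 (x, t) := by
    intro x t
    have h3 : iteratedDeriv 3 (fun y => u y t) x = U3 (x, t) := by
      have f1 : deriv (fun y => u y t) = fun y => U1 (y, t) := e1 t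
      have f2 : deriv (fun y => U1 (y, t)) = fun y => U2 (y, t) :=
        funext fun y => (hdx1 y t).deriv
      have f3 : deriv (fun y => U2 (y, t)) = fun y => U3 (y, t) :=
        funext fun y => (hdx2 y t).deriv
      rw [show (3 : ℕ) = 2 + 1 from rfl, iteratedDeriv_succ,
        show (2 : ℕ) = 1 + 1 from rfl, iteratedDeriv_succ, iteratedDeriv_one, f1, f2, f3]
    have hp := hPDE x t
    rw [(hdt0 x t).deriv, h3, (hdx0 x t).deriv] at hp
    change V (x, t) + U3 (x, t) = (u x t ^ 3 - c t) * U1 (x, t) at hp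
    linarith
  -- mixed partial derivative
  have hW : ∀ x t : ℝ,
      W (x, t) = -U4 (x, t) + (3 * u x t ^ 2 * U1 (x, t)) * U1 (x, t) +
        (u x t ^ 3 - c t) * U2 (x, t) := by
    intro x t
    have hVx : HasDerivAt (fun y => V (y, t))
        (-U4 (x, t) + ((3 * u x t ^ 2 * U1 (x, t)) * U1 (x, t) +
          (u x t ^ 3 - c t) * U2 (x, t))) x := by
      have hfun : (fun y => V (y, t)) =
          fun y => -U3 (y, t) + (u y t ^ 3 - c t) * U1 (y, t) := funext fun y => hV y t
      rw [hfun]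
      have h1 : HasDerivAt (fun y => -U3 (y, t)) (-U4 (x, t)) x := (hdx3 x t).neg
      have h2 : HasDerivAt (fun y => (u y t ^ 3 - c t) * U1 (y, t))
          ((3 * u x t ^ 2 * U1 (x, t)) * U1 (x, t) + (u x t ^ 3 - c t) * U2 (x, t)) x := by
        have hp : HasDerivAt (fun y => u y t ^ 3 - c t) (3 * u x t ^ 2 * U1 (x, t)) x := by
          have h := ((hdx0 x t).pow 3).sub_const (c t)
          refine h.congr_deriv ?_
          norm_num
        exact hp.mul (hdx1 x t)
      exact h1.add h2
    have hsym : W (x, t) = fderiv ℝ V (x, t) (1, 0) := mixed_symm hsmooth (x, t)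
    have hVx' : HasDerivAt (fun y => V (y, t)) (fderiv ℝ V (x, t) (1, 0)) x :=
      hasDerivAt_x hVc x t
    rw [hsym, hVx'.unique hVx]
    ring
  -- periodicity of the derivatives
  have hper0 : ∀ t : ℝ, Function.Periodic (fun y => u y t) (2 * Real.pi) := fun t x => hper x t
  have hper1 : ∀ x t : ℝ, U1 (x + 2 * Real.pi, t) = U1 (x, t) := by
    intro x t
    have := periodic_deriv (f := fun y => u y t) (fun y => hper y t) x
    rwa [e1 t] at this
  have hper2 : ∀ x t : ℝ, U2 (x + 2 * Real.pi, t) = U2 (x, t) := by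
    intro x t
    have := periodic_deriv (f := fun y => U1 (y, t)) (fun y => hper1 y t) x
    rwa [funext fun y => (hdx1 y t).deriv] at this
  have hper3 : ∀ x t : ℝ, U3 (x + 2 * Real.pi, t) = U3 (x, t) := by
    intro x t
    have := periodic_deriv (f := fun y => U2 (y, t)) (fun y => hper2 y t) x
    rwa [funext fun y => (hdx2 y t).deriv] at this
  -- the Hamiltonian as a single integral
  set Φ : ℝ → ℝ := fun t =>
    ∫ x in (0:ℝ)..(2 * Real.pi), ((1/2) * (U1 (x, t))^2 + (1/20) * (u x t)^5) with hΦdef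
  have contx : ∀ (f : ℝ × ℝ → ℝ), ContDiff ℝ (⊤ : ℕ∞) f → ∀ t : ℝ,
      Continuous (fun x => f (x, t)) := fun f hf t =>
    hf.continuous.comp (continuous_id.prodMk continuous_const)
  have hΦeq : ∀ t : ℝ,
      (1 / 2) * (∫ x in (0:ℝ)..(2 * Real.pi), (deriv (fun y => u y t) x) ^ 2) +
        (1 / 20) * (∫ x in (0:ℝ)..(2 * Real.pi), u x t ^ 5) = Φ t := by
    intro t
    rw [hΦdef]
    simp only [e1 t]
    rw [← intervalIntegral.integral_const_mul, ← intervalIntegral.integral_const_mul,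
      ← intervalIntegral.integral_add]
    · exact (continuous_const.mul ((contx U1 hU1c t).pow 2)).intervalIntegrable _ _
    · exact (continuous_const.mul ((contx U0 hsmooth t).pow 5)).intervalIntegrable _ _
  -- derivative of Φ is zero
  have hΦ' : ∀ t₀ : ℝ, HasDerivAt Φ 0 t₀ := by
    intro t₀
    have hG'cont : Continuous (fun p : ℝ × ℝ => U1 p * W p + (1/4) * (U0 p)^4 * V p) :=
      (hU1c.continuous.mul hWc.continuous).add
        ((continuous_const.mul (hsmooth.continuous.pow 4)).mul hVc.continuous)
    obtain ⟨C, hC⟩ := ((isCompact_Icc (a := (0:ℝ)) (b := 2*Real.pi)).prod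
        (isCompact_closedBall t₀ 1)).exists_bound_of_continuousOn hG'cont.continuousOn
    have hsub : Set.uIoc (0:ℝ) (2*Real.pi) ⊆ Set.Icc (0:ℝ) (2*Real.pi) := by
      rw [Set.uIoc_of_le (by positivity)]
      exact Set.Ioc_subset_Icc_self
    have key := intervalIntegral.hasDerivAt_integral_of_dominated_loc_of_deriv_le
      (F := fun s x => (1/2) * (U1 (x, s))^2 + (1/20) * (u x s)^5)
      (F' := fun s x => U1 (x, s) * W (x, s) + (1/4) * (u x s)^4 * V (x, s))
      (x₀ := t₀) (a := 0) (b := 2*Real.pi) (bound := fun _ => C)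
      (μ := MeasureTheory.volume) (Metric.ball_mem_nhds t₀ one_pos)
      (Filter.Eventually.of_forall fun s =>
        (((continuous_const.mul ((contx U1 hU1c s).pow 2)).add
          (continuous_const.mul ((contx U0 hsmooth s).pow 5)))).aestronglyMeasurable)
      (((continuous_const.mul ((contx U1 hU1c t₀).pow 2)).add
          (continuous_const.mul ((contx U0 hsmooth t₀).pow 5))).intervalIntegrable _ _)
      ((hG'cont.comp (continuous_id.prodMk continuous_const)).aestronglyMeasurable)
      (Filter.Eventually.of_forall fun x hx s hs =>
        hC (x, s) ⟨hsub hx, Metric.ball_subset_closedBall hs⟩)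
      (intervalIntegrable_const)
      (Filter.Eventually.of_forall fun x _ s _ => by
        have h1 := ((hdt1 x s).pow 2).const_mul ((1:ℝ)/2)
        have h2 := ((hdt0 x s).pow 5).const_mul ((1:ℝ)/20)
        have h := h1.add h2
        refine h.congr_deriv ?_
        push_cast
        norm_num
        ring)
    have hderiv : HasDerivAt Φ
        (∫ x in (0:ℝ)..(2*Real.pi), (U1 (x, t₀) * W (x, t₀) +
          (1/4) * (u x t₀)^4 * V (x, t₀))) t₀ := key.2
    have hint0 : (∫ x in (0:ℝ)..(2*Real.pi), (U1 (x, t₀) * W (x, t₀) +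
        (1/4) * (u x t₀)^4 * V (x, t₀))) = 0 := by
      set g : ℝ → ℝ := fun y => -(U1 (y, t₀) * U3 (y, t₀)) + (U2 (y, t₀))^2/2 +
        (u y t₀)^3 * (U1 (y, t₀))^2 - c t₀ * (U1 (y, t₀))^2/2 -
        (u y t₀)^4 * U2 (y, t₀)/4 + (u y t₀)^8/32 - c t₀/20 * (u y t₀)^5 with hgdef
      have hg : ∀ x : ℝ, HasDerivAt g
          (U1 (x, t₀) * W (x, t₀) + (1/4) * (u x t₀)^4 * V (x, t₀)) x := by
        intro x
        have t1 := ((hdx1 x t₀).mul (hdx3 x t₀)).neg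
        have t2 := ((hdx2 x t₀).pow 2).div_const 2
        have t3 := ((hdx0 x t₀).pow 3).mul ((hdx1 x t₀).pow 2)
        have t4 := (((hdx1 x t₀).pow 2).const_mul (c t₀)).div_const 2
        have t5 := (((hdx0 x t₀).pow 4).mul (hdx2 x t₀)).div_const 4
        have t6 := ((hdx0 x t₀).pow 8).div_const 32
        have t7 := ((hdx0 x t₀).pow 5).const_mul (c t₀/20)
        have total := (((((t1.add t2).add t3).sub t4).sub t5).add t6).sub t7
        rw [hgdef]
        refine total.congr_deriv ?_
        rw [hW x t₀, hV x t₀]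
        push_cast
        norm_num
        ring
      have hFTC := intervalIntegral.integral_eq_sub_of_hasDerivAt
        (f := g) (a := 0) (b := 2*Real.pi) (fun x _ => hg x)
        ((hG'cont.comp (continuous_id.prodMk continuous_const)).intervalIntegrable _ _)
      rw [hFTC, hgdef]
      simp only
      rw [show (2*Real.pi : ℝ) = 0 + 2*Real.pi by ring, hper 0 t₀, hper1 0 t₀,
        hper2 0 t₀, hper3 0 t₀]
      ring
    rw [hint0] at hderiv
    exact hderiv
  have hconst : ∀ s₁ s₂ : ℝ, Φ s₁ = Φ s₂ := by
    intro s₁ s₂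
    exact is_const_of_deriv_eq_zero (fun t => (hΦ' t).differentiableAt)
      (fun t => (hΦ' t).deriv) s₁ s₂
  intro t₁ t₂
  rw [hΦeq t₁, hΦeq t₂]
  exact hconst t₁ t₂
end

section
/- Let u : ℝ × ℝ → ℝ be a C^∞ function, 2π-periodic in its first argument, such that for every t the function u(·,t) belongs to E_N (i.e. u(x,t) = Σ_{0<|n|≤N} c_n(t) e^{inx} with c_{−n} = conj(c_n)), and suppose u solves ∂_t u + ∂_x³ u = ℙ_N( ℙ(u³) ∂_x u ) for all (x,t). Then the function t ↦ (1/2) ∫₀^{2π} (∂_x u(x,t))² dx + (1/20) ∫₀^{2π} u(x,t)⁵ dx is constant on ℝ. -/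
open scoped Real

/-- The `n`-th Fourier coefficient `ŵ(n) = (1/2π) ∫₀^{2π} w(y) e^{-iny} dy` of a
`2π`-periodic real-valued function `w`. -/
noncomputable def fourierCoefOn (w : ℝ → ℝ) (n : ℤ) : ℂ :=
  (1 / (2 * (π : ℂ))) * ∫ y in (0:ℝ)..(2 * π), (w y : ℂ) * Complex.exp (-(Complex.I * n * y))

namespace GKdVAux

open MeasureTheory intervalIntegral Complex Finset Function

lemma wt1 : ((⊤:ℕ∞) : WithTop ℕ∞) ≠ 0 := by simp
lemma wt2 : ((⊤:ℕ∞) : WithTop ℕ∞) + 1 ≤ ((⊤:ℕ∞) : WithTop ℕ∞) := by exact_mod_cast le_top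

noncomputable def pdx (f : ℝ → ℝ → ℝ) : ℝ → ℝ → ℝ := fun x t => deriv (fun y => f y t) x
noncomputable def pdt (f : ℝ → ℝ → ℝ) : ℝ → ℝ → ℝ := fun x t => deriv (fun s => f x s) t

lemma hasDerivAt_slice_x {f : ℝ → ℝ → ℝ} (hf : ContDiff ℝ (⊤:ℕ∞) (uncurry f)) (x t : ℝ) :
    HasDerivAt (fun y => f y t) (fderiv ℝ (uncurry f) (x, t) (1, 0)) x := by
  have h1 : HasFDerivAt (uncurry f) (fderiv ℝ (uncurry f) (x, t)) (x, t) :=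
    (hf.differentiable wt1 (x, t)).hasFDerivAt
  have h2 : HasDerivAt (fun y : ℝ => (y, t)) ((1:ℝ), (0:ℝ)) x :=
    (hasDerivAt_id x).prodMk (hasDerivAt_const x t)
  exact h1.comp_hasDerivAt x h2

lemma hasDerivAt_slice_t {f : ℝ → ℝ → ℝ} (hf : ContDiff ℝ (⊤:ℕ∞) (uncurry f)) (x t : ℝ) :
    HasDerivAt (fun s => f x s) (fderiv ℝ (uncurry f) (x, t) (0, 1)) t := by
  have h1 : HasFDerivAt (uncurry f) (fderiv ℝ (uncurry f) (x, t)) (x, t) :=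
    (hf.differentiable wt1 (x, t)).hasFDerivAt
  have h2 : HasDerivAt (fun s : ℝ => (x, s)) ((0:ℝ), (1:ℝ)) t :=
    (hasDerivAt_const t x).prodMk (hasDerivAt_id t)
  exact h1.comp_hasDerivAt t h2

lemma pdx_eq {f : ℝ → ℝ → ℝ} (hf : ContDiff ℝ (⊤:ℕ∞) (uncurry f)) (x t : ℝ) :
    pdx f x t = fderiv ℝ (uncurry f) (x, t) (1, 0) := (hasDerivAt_slice_x hf x t).deriv

lemma pdt_eq {f : ℝ → ℝ → ℝ} (hf : ContDiff ℝ (⊤:ℕ∞) (uncurry f)) (x t : ℝ) :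
    pdt f x t = fderiv ℝ (uncurry f) (x, t) (0, 1) := (hasDerivAt_slice_t hf x t).deriv

lemma hasDerivAt_pdx {f : ℝ → ℝ → ℝ} (hf : ContDiff ℝ (⊤:ℕ∞) (uncurry f)) (x t : ℝ) :
    HasDerivAt (fun y => f y t) (pdx f x t) x := by
  rw [pdx_eq hf]; exact hasDerivAt_slice_x hf x t

lemma hasDerivAt_pdt {f : ℝ → ℝ → ℝ} (hf : ContDiff ℝ (⊤:ℕ∞) (uncurry f)) (x t : ℝ) :
    HasDerivAt (fun s => f x s) (pdt f x t) t := by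
  rw [pdt_eq hf]; exact hasDerivAt_slice_t hf x t

lemma contDiff_pdx {f : ℝ → ℝ → ℝ} (hf : ContDiff ℝ (⊤:ℕ∞) (uncurry f)) :
    ContDiff ℝ (⊤:ℕ∞) (uncurry (pdx f)) := by
  have : uncurry (pdx f) = fun p : ℝ × ℝ => fderiv ℝ (uncurry f) p ((1:ℝ), (0:ℝ)) := by
    funext p
    exact pdx_eq hf p.1 p.2
  rw [this]
  exact (hf.fderiv_right wt2).clm_apply contDiff_const

lemma contDiff_pdt {f : ℝ → ℝ → ℝ} (hf : ContDiff ℝ (⊤:ℕ∞) (uncurry f)) :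
    ContDiff ℝ (⊤:ℕ∞) (uncurry (pdt f)) := by
  have : uncurry (pdt f) = fun p : ℝ × ℝ => fderiv ℝ (uncurry f) p ((0:ℝ), (1:ℝ)) := by
    funext p
    exact pdt_eq hf p.1 p.2
  rw [this]
  exact (hf.fderiv_right wt2).clm_apply contDiff_const

lemma cont_slice_x {f : ℝ → ℝ → ℝ} (hf : ContDiff ℝ (⊤:ℕ∞) (uncurry f)) (t : ℝ) :
    Continuous fun x => f x t :=
  hf.continuous.comp (continuous_id.prodMk continuous_const)

/-- Clairaut's theorem in the form we need. -/
lemma clairaut {f : ℝ → ℝ → ℝ} (hf : ContDiff ℝ (⊤:ℕ∞) (uncurry f)) (x t : ℝ) :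
    pdt (pdx f) x t = pdx (pdt f) x t := by
  set U := uncurry f with hU
  have hdf : ContDiff ℝ (⊤:ℕ∞) (fderiv ℝ U) := hf.fderiv_right wt2
  have h1 : uncurry (pdx f) = fun p : ℝ × ℝ => fderiv ℝ U p ((1:ℝ), (0:ℝ)) := by
    funext p; exact pdx_eq hf p.1 p.2
  have h2 : uncurry (pdt f) = fun p : ℝ × ℝ => fderiv ℝ U p ((0:ℝ), (1:ℝ)) := by
    funext p; exact pdt_eq hf p.1 p.2
  have key : ∀ v w : ℝ × ℝ,
      fderiv ℝ (fun p : ℝ × ℝ => fderiv ℝ U p v) (x, t) w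
        = fderiv ℝ (fderiv ℝ U) (x, t) w v := by
    intro v w
    have hdiff : DifferentiableAt ℝ (fderiv ℝ U) (x, t) :=
      hdf.differentiable wt1 (x, t)
    rw [fderiv_clm_apply hdiff (differentiableAt_const v)]
    simp
  have symm : ∀ v w : ℝ × ℝ,
      fderiv ℝ (fderiv ℝ U) (x, t) v w = fderiv ℝ (fderiv ℝ U) (x, t) w v := by
    intro v w
    exact second_derivative_symmetric (f := U) (f' := fderiv ℝ U)
      (fun y => (hf.differentiable wt1 y).hasFDerivAt)
      ((hdf.differentiable wt1 (x, t)).hasFDerivAt) v w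
  calc pdt (pdx f) x t
      = fderiv ℝ (uncurry (pdx f)) (x, t) ((0:ℝ), (1:ℝ)) := pdt_eq (contDiff_pdx hf) x t
    _ = fderiv ℝ (fderiv ℝ U) (x, t) ((0:ℝ),(1:ℝ)) ((1:ℝ),(0:ℝ)) := by rw [h1, key]
    _ = fderiv ℝ (fderiv ℝ U) (x, t) ((1:ℝ),(0:ℝ)) ((0:ℝ),(1:ℝ)) := symm _ _
    _ = fderiv ℝ (uncurry (pdt f)) (x, t) ((1:ℝ), (0:ℝ)) := by rw [h2, key]
    _ = pdx (pdt f) x t := (pdx_eq (contDiff_pdt hf) x t).symm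

lemma periodic_deriv_real {f : ℝ → ℝ} (hf : ∀ x, f (x + 2*π) = f x) (x : ℝ) :
    deriv f (x + 2*π) = deriv f x := by
  have h1 : deriv (fun y => f (y + 2*π)) x = deriv f (x + 2*π) := by
    simpa using deriv_comp_add_const f (2*π) x
  have h2 : (fun y => f (y + 2*π)) = f := funext hf
  rw [h2] at h1
  exact h1.symm

/-- Differentiation under the interval integral for smooth integrands. -/
lemma hasDerivAt_integral_param {f : ℝ → ℝ → ℝ} (hf : ContDiff ℝ (⊤:ℕ∞) (uncurry f)) (t₀ : ℝ) :
    HasDerivAt (fun t => ∫ x in (0:ℝ)..(2*π), f x t)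
      (∫ x in (0:ℝ)..(2*π), pdt f x t₀) t₀ := by
  have hcont : Continuous (uncurry (pdt f)) := (contDiff_pdt hf).continuous
  obtain ⟨C, hC⟩ :=
    (isCompact_Icc.prod (isCompact_closedBall t₀ 1)).exists_bound_of_continuousOn
      (hcont.continuousOn (s := Set.Icc (0:ℝ) (2*π) ×ˢ Metric.closedBall t₀ 1))
  have hIoc : Set.uIoc (0:ℝ) (2*π) = Set.Ioc 0 (2*π) := Set.uIoc_of_le (by positivity)
  have key := intervalIntegral.hasDerivAt_integral_of_dominated_loc_of_deriv_le
    (F := fun t x => f x t) (F' := fun t x => pdt f x t) (x₀ := t₀)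
    (a := (0:ℝ)) (b := 2*π) (μ := volume) (bound := fun _ => C)
    (s := Metric.ball t₀ 1) (Metric.ball_mem_nhds t₀ one_pos)
    (Filter.Eventually.of_forall fun t =>
      ((cont_slice_x hf t).aestronglyMeasurable))
    ((cont_slice_x hf t₀).intervalIntegrable _ _)
    ((cont_slice_x (contDiff_pdt hf) t₀).aestronglyMeasurable)
    ?_ (intervalIntegrable_const) ?_
  · exact key.2
  · refine Filter.Eventually.of_forall fun x hx s hs => ?_
    have hx' : x ∈ Set.Icc (0:ℝ) (2*π) := by
      rw [hIoc] at hx; exact ⟨le_of_lt hx.1, hx.2⟩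
    have hs' : s ∈ Metric.closedBall t₀ 1 := Metric.ball_subset_closedBall hs
    exact hC (x, s) ⟨hx', hs'⟩
  · exact Filter.Eventually.of_forall fun x _ s _ => hasDerivAt_pdt hf x s

/-- `∫₀^{2π} f' = 0` for periodic `f`. -/
lemma integral_deriv_periodic_zero {f f' : ℝ → ℝ}
    (h : ∀ x, HasDerivAt f (f' x) x) (hc : Continuous f') (hp : f (2*π) = f 0) :
    ∫ x in (0:ℝ)..(2*π), f' x = 0 := by
  rw [intervalIntegral.integral_eq_sub_of_hasDerivAt (fun x _ => h x)
    (hc.intervalIntegrable _ _), hp, sub_self]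

/-- Integration by parts with periodic boundary conditions, general normed algebra. -/
lemma ibp_periodic {A : Type*} [NormedRing A] [NormedAlgebra ℝ A] [CompleteSpace A]
    {f g f' g' : ℝ → A}
    (hf : ∀ x, HasDerivAt f (f' x) x) (hg : ∀ x, HasDerivAt g (g' x) x)
    (hf' : Continuous f') (hg' : Continuous g')
    (hfp : f (2*π) = f 0) (hgp : g (2*π) = g 0) :
    ∫ x in (0:ℝ)..(2*π), f' x * g x = - ∫ x in (0:ℝ)..(2*π), f x * g' x := by
  have hfc : Continuous f := Differentiable.continuous (fun x => (hf x).differentiableAt)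
  have hgc : Continuous g := Differentiable.continuous (fun x => (hg x).differentiableAt)
  have key := intervalIntegral.integral_deriv_mul_eq_sub (a := (0:ℝ)) (b := 2*π)
    (fun x _ => hf x) (fun x _ => hg x)
    (hf'.intervalIntegrable _ _) (hg'.intervalIntegrable _ _)
  rw [hfp, hgp, sub_self] at key
  have hsplit : ∫ x in (0:ℝ)..(2*π), (f' x * g x + f x * g' x)
      = (∫ x in (0:ℝ)..(2*π), f' x * g x) + ∫ x in (0:ℝ)..(2*π), f x * g' x := by
    exact intervalIntegral.integral_add
      ((hf'.mul hgc).intervalIntegrable _ _) ((hfc.mul hg').intervalIntegrable _ _)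
  rw [hsplit] at key
  rw [eq_neg_of_add_eq_zero_left key]

lemma two_pi_ne : ((2*π : ℝ) : ℂ) ≠ 0 := by
  simp [Complex.ofReal_ne_zero, Real.pi_ne_zero]

lemma cont_ofReal {g : ℝ → ℝ} (hg : Continuous g) : Continuous fun x : ℝ => (g x : ℂ) :=
  Complex.continuous_ofReal.comp hg

lemma cont_e (n : ℤ) : Continuous fun x : ℝ => Complex.exp (Complex.I * n * x) :=
  Complex.continuous_exp.comp (by continuity)

lemma hasDerivAt_cexp_mul (c : ℂ) (x : ℝ) :
    HasDerivAt (fun y : ℝ => Complex.exp (c * y)) (c * Complex.exp (c * x)) x := by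
  have h1 : HasDerivAt (fun w : ℂ => Complex.exp (c * w)) (c * Complex.exp (c * (x:ℂ))) (x:ℂ) := by
    have hin : HasDerivAt (fun w : ℂ => c * w) c (x:ℂ) := by
      simpa using (hasDerivAt_id (x:ℂ)).const_mul c
    simpa [mul_comm] using hin.cexp
  exact h1.comp_ofReal

lemma hasDerivAt_e (n : ℤ) (x : ℝ) :
    HasDerivAt (fun y : ℝ => Complex.exp (Complex.I * n * y))
      (Complex.I * n * Complex.exp (Complex.I * n * x)) x := by
  have := hasDerivAt_cexp_mul (Complex.I * n) x
  simpa [mul_assoc] using this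

lemma hasDerivAt_eneg (n : ℤ) (x : ℝ) :
    HasDerivAt (fun y : ℝ => Complex.exp (-(Complex.I * n * y)))
      (-(Complex.I * n) * Complex.exp (-(Complex.I * n * x))) x := by
  have := hasDerivAt_cexp_mul (-(Complex.I * n)) x
  have harg : ∀ y : ℝ, -(Complex.I * n) * (y:ℂ) = -(Complex.I * n * y) := by
    intro y; ring
  simpa [harg] using this

/-- `∫₀^{2π} g(x) e^{inx} dx = 2π ĝ(-n)`. -/
lemma integral_mul_e (g : ℝ → ℝ) (n : ℤ) :
    ∫ x in (0:ℝ)..(2*π), (g x : ℂ) * Complex.exp (Complex.I * n * x)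
      = (2*π : ℝ) * fourierCoefOn g (-n) := by
  have harg : (fun y : ℝ => (g y : ℂ) * Complex.exp (-(Complex.I * ((-n : ℤ) : ℂ) * y)))
      = fun y : ℝ => (g y : ℂ) * Complex.exp (Complex.I * n * y) := by
    funext y
    push_cast
    ring_nf
  rw [fourierCoefOn, harg]
  rw [← mul_assoc]
  have : ((2*π : ℝ) : ℂ) * (1 / (2 * (π:ℂ))) = 1 := by
    push_cast
    rw [mul_one_div, div_self]
    exact mul_ne_zero two_ne_zero (Complex.ofReal_ne_zero.mpr Real.pi_ne_zero)
  rw [this, one_mul]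

lemma exp_two_pi (n : ℤ) : Complex.exp (-(Complex.I * n * ((2*π : ℝ):ℂ))) = 1 := by
  have : -(Complex.I * n * ((2*π : ℝ):ℂ)) = ((-n : ℤ) : ℂ) * (2 * π * Complex.I) := by
    push_cast; ring
  rw [this, Complex.exp_int_mul_two_pi_mul_I]

lemma exp_two_pi' (n : ℤ) : Complex.exp (Complex.I * n * ((2*π : ℝ):ℂ)) = 1 := by
  have : Complex.I * n * ((2*π : ℝ):ℂ) = ((n : ℤ) : ℂ) * (2 * π * Complex.I) := by
    push_cast; ring
  rw [this, Complex.exp_int_mul_two_pi_mul_I]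

lemma cont_eneg (n : ℤ) : Continuous fun x : ℝ => Complex.exp (-(Complex.I * n * x)) :=
  Complex.continuous_exp.comp (by continuity)

/-- Fourier coefficient of a derivative of a periodic function. -/
lemma fourierCoefOn_deriv {f f' : ℝ → ℝ} (h : ∀ x, HasDerivAt f (f' x) x)
    (hc : Continuous f') (hp : f (2*π) = f 0) (n : ℤ) :
    fourierCoefOn f' n = Complex.I * n * fourierCoefOn f n := by
  have hibp : ∫ x in (0:ℝ)..(2*π), ((f' x : ℂ)) * Complex.exp (-(Complex.I * n * x))
      = - ∫ x in (0:ℝ)..(2*π),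
          (f x : ℂ) * (-(Complex.I * n) * Complex.exp (-(Complex.I * n * x))) := by
    apply ibp_periodic (fun x => (h x).ofReal_comp) (fun x => hasDerivAt_eneg n x)
      (cont_ofReal hc) (continuous_const.mul (cont_eneg n))
    · exact_mod_cast congrArg (fun r : ℝ => (r : ℂ)) hp
    · refine (exp_two_pi n).trans ?_
      symm
      simp
  have hpull : ∫ x in (0:ℝ)..(2*π),
      (f x : ℂ) * (-(Complex.I * n) * Complex.exp (-(Complex.I * n * x)))
      = (-(Complex.I * n)) * ∫ x in (0:ℝ)..(2*π),
          (f x : ℂ) * Complex.exp (-(Complex.I * n * x)) := by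
    rw [← intervalIntegral.integral_const_mul]
    congr 1
    funext x
    ring
  rw [hpull] at hibp
  rw [fourierCoefOn, fourierCoefOn, hibp]
  ring

/-- Pairing of a trigonometric sum against a continuous function. -/
lemma integral_mul_trig_sum {g : ℝ → ℝ} (hg : Continuous g) (s : Finset ℤ) (κ : ℤ → ℂ) :
    ∫ x in (0:ℝ)..(2*π), (g x : ℂ) * (∑ n ∈ s, κ n * Complex.exp (Complex.I * n * x))
      = ∑ n ∈ s, κ n * ((2*π : ℝ) * fourierCoefOn g (-n)) := by
  have h1 : (fun x : ℝ => (g x : ℂ) * (∑ n ∈ s, κ n * Complex.exp (Complex.I * n * x)))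
      = fun x : ℝ => ∑ n ∈ s, κ n * ((g x : ℂ) * Complex.exp (Complex.I * n * x)) := by
    funext x
    rw [Finset.mul_sum]
    congr 1
    funext n
    ring
  rw [h1, intervalIntegral.integral_finset_sum]
  · refine Finset.sum_congr rfl fun n _ => ?_
    rw [intervalIntegral.integral_const_mul, integral_mul_e]
  · intro n _
    exact (continuous_const.mul ((cont_ofReal hg).mul (cont_e n))).intervalIntegrable _ _

/-- Derivative of a real function with a trigonometric expansion. -/
lemma deriv_trig_sum {f f' : ℝ → ℝ} {a : ℤ → ℂ} {s : Finset ℤ}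
    (h : ∀ x, HasDerivAt f (f' x) x)
    (hf : ∀ x : ℝ, ((f x : ℝ) : ℂ) = ∑ n ∈ s, a n * Complex.exp (Complex.I * n * x)) (x : ℝ) :
    ((f' x : ℝ) : ℂ)
      = ∑ n ∈ s, (a n * (Complex.I * n)) * Complex.exp (Complex.I * n * x) := by
  have h1 : HasDerivAt (fun y : ℝ => ((f y : ℝ) : ℂ)) (f' x) x := (h x).ofReal_comp
  have h2 : HasDerivAt (fun y : ℝ => ∑ n ∈ s, a n * Complex.exp (Complex.I * n * y))
      (∑ n ∈ s, (a n * (Complex.I * n)) * Complex.exp (Complex.I * n * x)) x := by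
    apply HasDerivAt.fun_sum
    intro n _
    have := (hasDerivAt_e n x).const_mul (a n)
    refine this.congr_deriv ?_
    ring
  have heq : (fun y : ℝ => ((f y : ℝ) : ℂ))
      = fun y : ℝ => ∑ n ∈ s, a n * Complex.exp (Complex.I * n * y) := funext hf
  rw [heq] at h1
  exact h1.unique h2

lemma sum_neg_index {s : Finset ℤ} (hs : ∀ n ∈ s, -n ∈ s) (g : ℤ → ℂ) :
    ∑ n ∈ s, g (-n) = ∑ n ∈ s, g n := by
  refine Finset.sum_nbij' (fun n => -n) (fun n => -n) hs hs
    (fun a _ => neg_neg a) (fun a _ => neg_neg a) (fun a _ => rfl)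

lemma sum_antisymm_zero {s : Finset ℤ} (hs : ∀ n ∈ s, -n ∈ s) (g : ℤ → ℂ)
    (hg : ∀ n, g (-n) = - g n) : ∑ n ∈ s, g n = 0 := by
  have h1 : ∑ n ∈ s, g n = - ∑ n ∈ s, g n := by
    conv_lhs => rw [← sum_neg_index hs g]
    rw [← Finset.sum_neg_distrib]
    exact Finset.sum_congr rfl fun n _ => hg n
  have h2 : (2:ℂ) * ∑ n ∈ s, g n = 0 := by
    rw [two_mul]
    nth_rewrite 1 [h1]
    ring
  exact (mul_eq_zero.mp h2).resolve_left two_ne_zero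

lemma ofReal_intervalIntegral (f : ℝ → ℝ) :
    ((∫ x in (0:ℝ)..(2*π), f x : ℝ) : ℂ) = ∫ x in (0:ℝ)..(2*π), ((f x : ℝ) : ℂ) :=
  (intervalIntegral.integral_ofReal (f := f)).symm

lemma fourierCoefOn_comb {f g : ℝ → ℝ} (hf : Continuous f) (hg : Continuous g)
    (a b : ℝ) (n : ℤ) :
    fourierCoefOn (fun y => a * f y + b * g y) n
      = a * fourierCoefOn f n + b * fourierCoefOn g n := by
  unfold fourierCoefOn
  have h1 : (fun y : ℝ => ((a * f y + b * g y : ℝ) : ℂ) * Complex.exp (-(Complex.I * n * y)))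
      = fun y : ℝ => (a:ℂ) * ((f y : ℂ) * Complex.exp (-(Complex.I * n * y)))
          + (b:ℂ) * ((g y : ℂ) * Complex.exp (-(Complex.I * n * y))) := by
    funext y
    push_cast
    ring
  rw [h1, intervalIntegral.integral_add, intervalIntegral.integral_const_mul,
    intervalIntegral.integral_const_mul]
  · ring
  · exact (continuous_const.mul ((cont_ofReal hf).mul (cont_eneg n))).intervalIntegrable _ _
  · exact (continuous_const.mul ((cont_ofReal hg).mul (cont_eneg n))).intervalIntegrable _ _

/-- The core cancellation identity. -/
lemma core {S : Finset ℤ} (hSneg : ∀ n ∈ S, -n ∈ S)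
    {U V V2 V3 W wt : ℝ → ℝ} {m : ℝ}
    (hUV : ∀ x, HasDerivAt U (V x) x) (hVV2 : ∀ x, HasDerivAt V (V2 x) x)
    (hV2V3 : ∀ x, HasDerivAt V2 (V3 x) x)
    (contV : Continuous V) (contV2 : Continuous V2) (contV3 : Continuous V3)
    (contW : Continuous W)
    (pU : U (2*π) = U 0) (pV : V (2*π) = V 0) (pV2 : V2 (2*π) = V2 0)
    (hwt : ∀ y, wt y = (U y ^ 3 - m) * V y)
    (hU : ∀ x : ℝ, ((U x : ℝ) : ℂ)
        = ∑ n ∈ S, fourierCoefOn U n * Complex.exp (Complex.I * n * x))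
    (hW : ∀ x : ℝ, ((W x : ℝ) : ℂ)
        = (∑ n ∈ S, fourierCoefOn wt n * Complex.exp (Complex.I * n * x)) - ((V3 x : ℝ) : ℂ)) :
    -(∫ x in (0:ℝ)..(2*π), V2 x * W x) + (1/4) * ∫ x in (0:ℝ)..(2*π), U x ^ 4 * W x = 0 := by
  have contU : Continuous U := Differentiable.continuous (fun x => (hUV x).differentiableAt)
  have contU4 : Continuous fun y => U y ^ 4 := contU.pow 4
  have contwt : Continuous wt := by
    have : wt = fun y => (U y ^ 3 - m) * V y := funext hwt
    rw [this]
    exact ((contU.pow 3).sub continuous_const).mul contV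
  -- trigonometric expansions of V and V2
  have hVexp : ∀ x : ℝ, ((V x : ℝ) : ℂ)
      = ∑ n ∈ S, (fourierCoefOn U n * (Complex.I * n)) * Complex.exp (Complex.I * n * x) :=
    deriv_trig_sum hUV hU
  have hV2exp : ∀ x : ℝ, ((V2 x : ℝ) : ℂ)
      = ∑ n ∈ S, ((fourierCoefOn U n * (Complex.I * n)) * (Complex.I * n)) * Complex.exp (Complex.I * n * x) :=
    deriv_trig_sum hVV2 hVexp
  -- coefficients of derivatives
  have hcV : ∀ n : ℤ, fourierCoefOn V n = Complex.I * n * fourierCoefOn U n := fun n =>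
    fourierCoefOn_deriv hUV contV pU n
  have hcV2 : ∀ n : ℤ, fourierCoefOn V2 n = Complex.I * n * (Complex.I * n * fourierCoefOn U n) := by
    intro n
    rw [fourierCoefOn_deriv hVV2 contV2 pV n, hcV n]
  -- the antiderivative q of wt
  have hq : ∀ x, HasDerivAt (fun y => 1/4 * U y ^ 4 + (-m) * U y) (wt x) x := by
    intro x
    have h1 : HasDerivAt (fun y => U y ^ 4) ((4:ℕ) * U x ^ 3 * V x) x := (hUV x).pow 4
    have h2 := (h1.const_mul (1/4 : ℝ)).fun_add ((hUV x).const_mul (-m))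
    refine h2.congr_deriv ?_
    rw [hwt x]
    push_cast
    ring
  have hqper : (fun y => 1/4 * U y ^ 4 + (-m) * U y) (2*π)
      = (fun y => 1/4 * U y ^ 4 + (-m) * U y) 0 := by simp [pU]
  have hb : ∀ n : ℤ, fourierCoefOn wt n
      = Complex.I * n * ((1/4 : ℝ) * fourierCoefOn (fun y => U y ^ 4) n
          + ((-m : ℝ)) * fourierCoefOn U n) := by
    intro n
    have h1 : fourierCoefOn wt n
        = Complex.I * n * fourierCoefOn (fun y => 1/4 * U y ^ 4 + (-m) * U y) n :=
      fourierCoefOn_deriv hq contwt hqper n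
    rw [h1, fourierCoefOn_comb contU4 contU (1/4) (-m) n]
  -- some vanishing real integrals
  have hVV2zero : ∫ x in (0:ℝ)..(2*π), V x * V2 x = 0 := by
    apply integral_deriv_periodic_zero (f := fun x => 1/2 * V x ^ 2)
    · intro x
      have := ((hVV2 x).fun_pow 2).const_mul (1/2 : ℝ)
      refine this.congr_deriv ?_
      push_cast
      ring
    · exact contV.mul contV2
    · simp [pV]
  have hVU4zero : ∫ x in (0:ℝ)..(2*π), V x * U x ^ 4 = 0 := by
    apply integral_deriv_periodic_zero (f := fun x => 1/5 * U x ^ 5)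
    · intro x
      have := ((hUV x).fun_pow 5).const_mul (1/5 : ℝ)
      refine this.congr_deriv ?_
      push_cast
      ring
    · exact contV.mul contU4
    · simp [pU]
  have hV2V3zero : ∫ x in (0:ℝ)..(2*π), V2 x * V3 x = 0 := by
    apply integral_deriv_periodic_zero (f := fun x => 1/2 * V2 x ^ 2)
    · intro x
      have := ((hV2V3 x).fun_pow 2).const_mul (1/2 : ℝ)
      refine this.congr_deriv ?_
      push_cast
      ring
    · exact contV2.mul contV3
    · simp [pV2]
  -- integration by parts for ∫ U⁴ V3
  have hU4V3 : ∫ x in (0:ℝ)..(2*π), U x ^ 4 * V3 x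
      = -(4 * ∫ x in (0:ℝ)..(2*π), U x ^ 3 * V x * V2 x) := by
    have hibp := ibp_periodic (f := fun x => U x ^ 4) (g := V2)
      (f' := fun x => 4 * U x ^ 3 * V x) (g' := V3)
      (fun x => by
        have := (hUV x).fun_pow 4
        convert this using 1 <;> norm_num)
      hV2V3
      ((continuous_const.mul (contU.pow 3)).mul contV) contV3
      (by simp [pU]) pV2
    have h2 : ∫ x in (0:ℝ)..(2*π), 4 * U x ^ 3 * V x * V2 x
        = 4 * ∫ x in (0:ℝ)..(2*π), U x ^ 3 * V x * V2 x := by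
      rw [← intervalIntegral.integral_const_mul]
      congr 1
      funext x
      ring
    rw [h2] at hibp
    linarith [hibp]
  set J : ℝ := ∫ x in (0:ℝ)..(2*π), U x ^ 3 * V x * V2 x with hJ_def
  have contSum : Continuous fun x : ℝ =>
      ∑ n ∈ S, fourierCoefOn wt n * Complex.exp (Complex.I * n * x) :=
    continuous_finset_sum _ fun n _ => continuous_const.mul (cont_e n)
  -- pairing of a function against W
  have main : ∀ g : ℝ → ℝ, Continuous g →
      (∫ x in (0:ℝ)..(2*π), ((g x : ℝ) : ℂ) * ((W x : ℝ) : ℂ))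
        = (∑ n ∈ S, fourierCoefOn wt n * ((2*π:ℝ) * fourierCoefOn g (-n)))
          - ∫ x in (0:ℝ)..(2*π), ((g x : ℝ) : ℂ) * ((V3 x : ℝ) : ℂ) := by
    intro g hg
    have h1 : (fun x : ℝ => ((g x : ℝ) : ℂ) * ((W x : ℝ) : ℂ))
        = fun x : ℝ => ((g x : ℝ) : ℂ)
              * (∑ n ∈ S, fourierCoefOn wt n * Complex.exp (Complex.I * n * x))
            - ((g x : ℝ) : ℂ) * ((V3 x : ℝ) : ℂ) := by
      funext x
      rw [hW x]
      ring
    rw [h1, intervalIntegral.integral_sub, integral_mul_trig_sum hg S (fun n => fourierCoefOn wt n)]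
    · exact ((cont_ofReal hg).mul contSum).intervalIntegrable _ _
    · exact ((cont_ofReal hg).mul (cont_ofReal contV3)).intervalIntegrable _ _
  -- ∫ V2·W
  have hC1 : ((∫ x in (0:ℝ)..(2*π), V2 x * W x : ℝ) : ℂ)
      = ∑ n ∈ S, fourierCoefOn wt n * ((2*π:ℝ) * fourierCoefOn V2 (-n)) := by
    have h0 : ((∫ x in (0:ℝ)..(2*π), V2 x * W x : ℝ) : ℂ)
        = ∫ x in (0:ℝ)..(2*π), ((V2 x : ℝ) : ℂ) * ((W x : ℝ) : ℂ) := by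
      rw [ofReal_intervalIntegral]
      congr 1
      funext x
      push_cast
      ring
    rw [h0, main V2 contV2]
    have hz : ∫ x in (0:ℝ)..(2*π), ((V2 x : ℝ) : ℂ) * ((V3 x : ℝ) : ℂ) = 0 := by
      have h1 : (fun x : ℝ => ((V2 x : ℝ) : ℂ) * ((V3 x : ℝ) : ℂ))
          = fun x : ℝ => ((V2 x * V3 x : ℝ) : ℂ) := by
        funext x; push_cast; ring
      rw [h1, intervalIntegral.integral_ofReal, hV2V3zero]
      simp
    rw [hz, sub_zero]
  -- ∫ U⁴·W
  have hC2 : ((∫ x in (0:ℝ)..(2*π), U x ^ 4 * W x : ℝ) : ℂ)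
      = (∑ n ∈ S, fourierCoefOn wt n * ((2*π:ℝ) * fourierCoefOn (fun y => U y ^ 4) (-n)))
        + ((4 * J : ℝ) : ℂ) := by
    have h0 : ((∫ x in (0:ℝ)..(2*π), U x ^ 4 * W x : ℝ) : ℂ)
        = ∫ x in (0:ℝ)..(2*π), ((U x ^ 4 : ℝ) : ℂ) * ((W x : ℝ) : ℂ) := by
      rw [ofReal_intervalIntegral]
      congr 1
      funext x
      push_cast
      ring
    have h0' : (fun y : ℝ => U y ^ 4) = fun y : ℝ => (fun z => U z ^ 4) y := rfl
    rw [h0, main (fun z => U z ^ 4) contU4]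
    have hz : ∫ x in (0:ℝ)..(2*π), ((U x ^ 4 : ℝ) : ℂ) * ((V3 x : ℝ) : ℂ)
        = ((-(4 * J) : ℝ) : ℂ) := by
      have h1 : (fun x : ℝ => ((U x ^ 4 : ℝ) : ℂ) * ((V3 x : ℝ) : ℂ))
          = fun x : ℝ => ((U x ^ 4 * V3 x : ℝ) : ℂ) := by
        funext x; push_cast; ring
      rw [h1, intervalIntegral.integral_ofReal, hU4V3]
    rw [hz]
    push_cast
    ring
  -- the adjoint computation : ∫ V2·wt equals the same sum as ∫ V2·W
  have hX : ((∫ x in (0:ℝ)..(2*π), V2 x * wt x : ℝ) : ℂ)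
      = ∑ n ∈ S, fourierCoefOn wt n * ((2*π:ℝ) * fourierCoefOn V2 (-n)) := by
    have h0 : ((∫ x in (0:ℝ)..(2*π), V2 x * wt x : ℝ) : ℂ)
        = ∫ x in (0:ℝ)..(2*π), ((wt x : ℝ) : ℂ)
            * (∑ n ∈ S, ((fourierCoefOn U n * (Complex.I * n)) * (Complex.I * n))
                * Complex.exp (Complex.I * n * x)) := by
      rw [ofReal_intervalIntegral]
      congr 1
      funext x
      rw [Complex.ofReal_mul, hV2exp x]
      ring
    rw [h0, integral_mul_trig_sum contwt S
      (fun n => (fourierCoefOn U n * (Complex.I * n)) * (Complex.I * n))]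
    rw [← sum_neg_index hSneg (fun n => ((fourierCoefOn U n * (Complex.I * n)) * (Complex.I * n))
      * ((2*π:ℝ) * fourierCoefOn wt (-n)))]
    refine Finset.sum_congr rfl fun n _ => ?_
    simp only [neg_neg]
    rw [hcV2 (-n)]
    push_cast
    ring
  -- real evaluation of ∫ V2·wt
  have hXreal : ∫ x in (0:ℝ)..(2*π), V2 x * wt x = J := by
    have h1 : (fun x : ℝ => V2 x * wt x)
        = fun x : ℝ => U x ^ 3 * V x * V2 x + (-m) * (V x * V2 x) := by
      funext x
      rw [hwt x]
      ring
    rw [h1, intervalIntegral.integral_add, intervalIntegral.integral_const_mul, hVV2zero]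
    · simp [hJ_def]
    · exact (((contU.pow 3).mul contV).mul contV2).intervalIntegrable _ _
    · exact (continuous_const.mul (contV.mul contV2)).intervalIntegrable _ _
  -- the sum against U⁴ vanishes
  have hTB : ∑ n ∈ S, fourierCoefOn wt n * ((2*π:ℝ) * fourierCoefOn (fun y => U y ^ 4) (-n))
      = 0 := by
    have hterm : ∀ n ∈ S, fourierCoefOn wt n
          * ((2*π:ℝ) * fourierCoefOn (fun y => U y ^ 4) (-n))
        = ((2*π:ℝ) : ℂ) * ((1/4 : ℂ) * (Complex.I * n * fourierCoefOn (fun y => U y ^ 4) n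
              * fourierCoefOn (fun y => U y ^ 4) (-n))
            + (-(m:ℂ)) * (Complex.I * n * fourierCoefOn U n
              * fourierCoefOn (fun y => U y ^ 4) (-n))) := by
      intro n _
      rw [hb n]
      push_cast
      ring
    rw [Finset.sum_congr rfl hterm, ← Finset.mul_sum, Finset.sum_add_distrib,
      ← Finset.mul_sum, ← Finset.mul_sum]
    have hS1 : ∑ n ∈ S, Complex.I * n * fourierCoefOn (fun y => U y ^ 4) n
        * fourierCoefOn (fun y => U y ^ 4) (-n) = 0 := by
      apply sum_antisymm_zero hSneg
      intro n
      simp only [neg_neg, Int.cast_neg]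
      ring
    have hS2 : ∑ n ∈ S, Complex.I * n * fourierCoefOn U n
        * fourierCoefOn (fun y => U y ^ 4) (-n) = 0 := by
      have hK : ((∫ x in (0:ℝ)..(2*π), V x * U x ^ 4 : ℝ) : ℂ)
          = ∑ n ∈ S, (fourierCoefOn U n * (Complex.I * n))
              * ((2*π:ℝ) * fourierCoefOn (fun y => U y ^ 4) (-n)) := by
        have h0 : ((∫ x in (0:ℝ)..(2*π), V x * U x ^ 4 : ℝ) : ℂ)
            = ∫ x in (0:ℝ)..(2*π), ((U x ^ 4 : ℝ) : ℂ)
                * (∑ n ∈ S, (fourierCoefOn U n * (Complex.I * n))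
                    * Complex.exp (Complex.I * n * x)) := by
          rw [ofReal_intervalIntegral]
          congr 1
          funext x
          rw [Complex.ofReal_mul, hVexp x]
          push_cast
          ring
        rw [h0, integral_mul_trig_sum contU4 S (fun n => fourierCoefOn U n * (Complex.I * n))]
      rw [hVU4zero] at hK
      have h2 : ((2*π:ℝ) : ℂ) * ∑ n ∈ S, Complex.I * n * fourierCoefOn U n
          * fourierCoefOn (fun y => U y ^ 4) (-n) = 0 := by
        rw [Finset.mul_sum]
        have h3 : ∑ n ∈ S, ((2*π:ℝ):ℂ) * (Complex.I * n * fourierCoefOn U n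
              * fourierCoefOn (fun y => U y ^ 4) (-n))
            = ∑ n ∈ S, (fourierCoefOn U n * (Complex.I * n))
                * (((2*π:ℝ):ℂ) * fourierCoefOn (fun y => U y ^ 4) (-n)) :=
          Finset.sum_congr rfl fun n _ => by ring
        rw [h3, ← hK]
        simp
      have h2π : (((2*π:ℝ)) : ℂ) ≠ 0 := two_pi_ne
      exact (mul_eq_zero.mp h2).resolve_left h2π
    rw [hS1, hS2]
    ring
  -- put everything together
  have e1 : ∫ x in (0:ℝ)..(2*π), V2 x * W x = J := by
    have h := hC1.trans hX.symm
    have h2 : (∫ x in (0:ℝ)..(2*π), V2 x * W x) = ∫ x in (0:ℝ)..(2*π), V2 x * wt x := by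
      exact_mod_cast h
    rw [h2, hXreal]
  have e2 : ∫ x in (0:ℝ)..(2*π), U x ^ 4 * W x = 4 * J := by
    have h := hC2
    rw [hTB, zero_add] at h
    exact_mod_cast h
  rw [e1, e2]
  ring


lemma iteratedDeriv_three (f : ℝ → ℝ → ℝ) (t x : ℝ) :
    iteratedDeriv 3 (fun y => f y t) x = pdx (pdx (pdx f)) x t := by
  have e1 : (3:ℕ) = 2+1 := rfl
  have e2 : (2:ℕ) = 1+1 := rfl
  have e3 : (1:ℕ) = 0+1 := rfl
  rw [e1, iteratedDeriv_succ, e2, iteratedDeriv_succ, e3, iteratedDeriv_succ, iteratedDeriv_zero]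
  rfl

end GKdVAux

/-- **Conservation of the Hamiltonian for the truncated gauge-transformed quartic gKdV.**
Let `u : ℝ × ℝ → ℝ` be `C^∞`, `2π`-periodic in its first argument, with `u(·,t) ∈ E_N`
(a real trigonometric polynomial with frequencies `0 < |n| ≤ N`) for every `t`, solving
`∂ₜ u + ∂ₓ³ u = ℙ_N(ℙ(u³) ∂ₓ u)`.  Then
`t ↦ (1/2)∫₀^{2π} (∂ₓ u)² dx + (1/20)∫₀^{2π} u⁵ dx` is constant on `ℝ`. -/
theorem hamiltonian_conserved_truncated_gkdv (N : ℕ) (hN : 1 ≤ N) (u : ℝ → ℝ → ℝ)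
    (hsmooth : ContDiff ℝ (⊤ : ℕ∞) (Function.uncurry u))
    (hper : ∀ x t : ℝ, u (x + 2 * π) t = u x t)
    (hEN : ∀ t x : ℝ, ((u x t : ℝ) : ℂ) =
      ∑ n ∈ (Finset.Icc (-(N : ℤ)) (N : ℤ)).erase 0,
        fourierCoefOn (fun y => u y t) n * Complex.exp (Complex.I * n * x))
    (hPDE : ∀ x t : ℝ,
      ((deriv (fun s => u x s) t + iteratedDeriv 3 (fun y => u y t) x : ℝ) : ℂ) =
        ∑ n ∈ (Finset.Icc (-(N : ℤ)) (N : ℤ)).erase 0,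
          fourierCoefOn (fun y =>
              (u y t ^ 3 - (1 / (2 * π)) * ∫ z in (0:ℝ)..(2 * π), u z t ^ 3) *
                deriv (fun w => u w t) y) n * Complex.exp (Complex.I * n * x)) :
    ∀ t₁ t₂ : ℝ,
      (1 / 2) * (∫ x in (0:ℝ)..(2 * π), (deriv (fun y => u y t₁) x) ^ 2) +
          (1 / 20) * (∫ x in (0:ℝ)..(2 * π), u x t₁ ^ 5) =
        (1 / 2) * (∫ x in (0:ℝ)..(2 * π), (deriv (fun y => u y t₂) x) ^ 2) +
          (1 / 20) * (∫ x in (0:ℝ)..(2 * π), u x t₂ ^ 5) := by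
  intro t₁ t₂
  open GKdVAux in
  have hsx : ContDiff ℝ (⊤:ℕ∞) (Function.uncurry (GKdVAux.pdx u)) := GKdVAux.contDiff_pdx hsmooth
  have hsxx : ContDiff ℝ (⊤:ℕ∞) (Function.uncurry (GKdVAux.pdx (GKdVAux.pdx u))) :=
    GKdVAux.contDiff_pdx hsx
  have hsxxx := GKdVAux.contDiff_pdx hsxx
  have hst : ContDiff ℝ (⊤:ℕ∞) (Function.uncurry (GKdVAux.pdt u)) := GKdVAux.contDiff_pdt hsmooth
  have hstx := GKdVAux.contDiff_pdx hst
  have hSneg : ∀ n ∈ (Finset.Icc (-(N : ℤ)) (N : ℤ)).erase 0,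
      -n ∈ (Finset.Icc (-(N : ℤ)) (N : ℤ)).erase 0 := by
    intro n hn
    simp only [Finset.mem_erase, Finset.mem_Icc] at hn ⊢
    omega
  set H : ℝ → ℝ := fun t => (1 / 2) * (∫ x in (0:ℝ)..(2 * π), (deriv (fun y => u y t) x) ^ 2) +
      (1 / 20) * (∫ x in (0:ℝ)..(2 * π), u x t ^ 5) with hH_def
  have key : ∀ t : ℝ, HasDerivAt H 0 t := by
    intro t
    -- smoothness of the squared/powered integrands
    have smA : ContDiff ℝ (⊤:ℕ∞) (Function.uncurry (fun x s => (GKdVAux.pdx u x s) ^ 2)) :=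
      hsx.pow 2
    have smB : ContDiff ℝ (⊤:ℕ∞) (Function.uncurry (fun x s => u x s ^ 5)) := hsmooth.pow 5
    -- derivative of the two integrals
    have hA := GKdVAux.hasDerivAt_integral_param smA t
    have hB := GKdVAux.hasDerivAt_integral_param smB t
    have hint1 : (∫ x in (0:ℝ)..(2*π), GKdVAux.pdt (fun x s => (GKdVAux.pdx u x s) ^ 2) x t)
        = 2 * ∫ x in (0:ℝ)..(2*π),
            GKdVAux.pdx u x t * GKdVAux.pdt (GKdVAux.pdx u) x t := by
      rw [← intervalIntegral.integral_const_mul]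
      congr 1
      funext x
      have h := ((GKdVAux.hasDerivAt_pdt hsx x t).fun_pow 2).deriv
      show deriv (fun s => GKdVAux.pdx u x s ^ 2) t = _
      rw [h]
      push_cast
      ring
    have hint2 : (∫ x in (0:ℝ)..(2*π), GKdVAux.pdt (fun x s => u x s ^ 5) x t)
        = 5 * ∫ x in (0:ℝ)..(2*π), u x t ^ 4 * GKdVAux.pdt u x t := by
      rw [← intervalIntegral.integral_const_mul]
      congr 1
      funext x
      have h := ((GKdVAux.hasDerivAt_pdt hsmooth x t).fun_pow 5).deriv
      show deriv (fun s => u x s ^ 5) t = _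
      rw [h]
      push_cast
      ring
    rw [hint1] at hA
    rw [hint2] at hB
    -- assemble the derivative of H
    have hH : HasDerivAt H
        ((1/2) * (2 * ∫ x in (0:ℝ)..(2*π),
            GKdVAux.pdx u x t * GKdVAux.pdt (GKdVAux.pdx u) x t)
          + (1/20) * (5 * ∫ x in (0:ℝ)..(2*π), u x t ^ 4 * GKdVAux.pdt u x t)) t :=
      (hA.const_mul (1/2 : ℝ)).add (hB.const_mul (1/20 : ℝ))
    -- Clairaut
    have hc1 : (∫ x in (0:ℝ)..(2*π), GKdVAux.pdx u x t * GKdVAux.pdt (GKdVAux.pdx u) x t)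
        = ∫ x in (0:ℝ)..(2*π), GKdVAux.pdx u x t * GKdVAux.pdx (GKdVAux.pdt u) x t := by
      congr 1
      funext x
      rw [GKdVAux.clairaut hsmooth x t]
    -- periodicity facts at time t
    have pU : u (2*π) t = u 0 t := by simpa using hper 0 t
    have pV : GKdVAux.pdx u (2*π) t = GKdVAux.pdx u 0 t := by
      simpa [GKdVAux.pdx] using GKdVAux.periodic_deriv_real (f := fun y => u y t) (fun y => hper y t) 0
    have pV2 : GKdVAux.pdx (GKdVAux.pdx u) (2*π) t = GKdVAux.pdx (GKdVAux.pdx u) 0 t := by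
      have hperx : ∀ y : ℝ, GKdVAux.pdx u (y + 2*π) t = GKdVAux.pdx u y t := fun y =>
        GKdVAux.periodic_deriv_real (f := fun y => u y t) (fun y => hper y t) y
      simpa [GKdVAux.pdx] using GKdVAux.periodic_deriv_real (f := fun y => GKdVAux.pdx u y t) hperx 0
    have pW : GKdVAux.pdt u (2*π) t = GKdVAux.pdt u 0 t := by
      have : (fun s => u (2*π) s) = fun s => u 0 s := by
        funext s
        simpa using hper 0 s
      show deriv (fun s => u (2*π) s) t = deriv (fun s => u 0 s) t
      rw [this]
    -- integration by parts
    have hc2 : (∫ x in (0:ℝ)..(2*π), GKdVAux.pdx u x t * GKdVAux.pdx (GKdVAux.pdt u) x t)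
        = - ∫ x in (0:ℝ)..(2*π), GKdVAux.pdx (GKdVAux.pdx u) x t * GKdVAux.pdt u x t := by
      have hibp := GKdVAux.ibp_periodic
        (f := fun x => GKdVAux.pdx u x t) (f' := fun x => GKdVAux.pdx (GKdVAux.pdx u) x t)
        (g := fun x => GKdVAux.pdt u x t) (g' := fun x => GKdVAux.pdx (GKdVAux.pdt u) x t)
        (fun x => GKdVAux.hasDerivAt_pdx hsx x t)
        (fun x => GKdVAux.hasDerivAt_pdx hst x t)
        (GKdVAux.cont_slice_x hsxx t) (GKdVAux.cont_slice_x hstx t)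
        pV pW
      linarith [hibp]
    -- the core cancellation
    have hW : ∀ x : ℝ, ((GKdVAux.pdt u x t : ℝ) : ℂ)
        = (∑ n ∈ (Finset.Icc (-(N : ℤ)) (N : ℤ)).erase 0,
            fourierCoefOn (fun y =>
                (u y t ^ 3 - (1 / (2 * π)) * ∫ z in (0:ℝ)..(2 * π), u z t ^ 3) *
                  deriv (fun w => u w t) y) n * Complex.exp (Complex.I * n * x))
          - ((GKdVAux.pdx (GKdVAux.pdx (GKdVAux.pdx u)) x t : ℝ) : ℂ) := by
      intro x
      have h := hPDE x t
      rw [GKdVAux.iteratedDeriv_three u t x] at h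
      push_cast at h
      have h' : ((GKdVAux.pdt u x t : ℝ) : ℂ)
          + ((GKdVAux.pdx (GKdVAux.pdx (GKdVAux.pdx u)) x t : ℝ) : ℂ)
          = ∑ n ∈ (Finset.Icc (-(N : ℤ)) (N : ℤ)).erase 0,
              fourierCoefOn (fun y =>
                  (u y t ^ 3 - (1 / (2 * π)) * ∫ z in (0:ℝ)..(2 * π), u z t ^ 3) *
                    deriv (fun w => u w t) y) n * Complex.exp (Complex.I * n * x) := h
      exact eq_sub_of_add_eq h'
    have hcore := GKdVAux.core (S := (Finset.Icc (-(N : ℤ)) (N : ℤ)).erase 0) hSneg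
      (U := fun x => u x t) (V := fun x => GKdVAux.pdx u x t)
      (V2 := fun x => GKdVAux.pdx (GKdVAux.pdx u) x t)
      (V3 := fun x => GKdVAux.pdx (GKdVAux.pdx (GKdVAux.pdx u)) x t)
      (W := fun x => GKdVAux.pdt u x t)
      (wt := fun y =>
        (u y t ^ 3 - (1 / (2 * π)) * ∫ z in (0:ℝ)..(2 * π), u z t ^ 3) *
          deriv (fun w => u w t) y)
      (m := (1 / (2 * π)) * ∫ z in (0:ℝ)..(2 * π), u z t ^ 3)
      (fun x => GKdVAux.hasDerivAt_pdx hsmooth x t)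
      (fun x => GKdVAux.hasDerivAt_pdx hsx x t)
      (fun x => GKdVAux.hasDerivAt_pdx hsxx x t)
      (GKdVAux.cont_slice_x hsx t) (GKdVAux.cont_slice_x hsxx t)
      (GKdVAux.cont_slice_x hsxxx t) (GKdVAux.cont_slice_x hst t)
      pU pV pV2 (fun y => rfl) (hEN t) hW
    have hcore' : -(∫ x in (0:ℝ)..(2*π),
          GKdVAux.pdx (GKdVAux.pdx u) x t * GKdVAux.pdt u x t)
        + (1/4) * ∫ x in (0:ℝ)..(2*π), u x t ^ 4 * GKdVAux.pdt u x t = 0 := hcore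
    have hzero : ((1/2 : ℝ) * (2 * ∫ x in (0:ℝ)..(2*π),
          GKdVAux.pdx u x t * GKdVAux.pdt (GKdVAux.pdx u) x t)
        + (1/20) * (5 * ∫ x in (0:ℝ)..(2*π), u x t ^ 4 * GKdVAux.pdt u x t)) = 0 := by
      rw [hc1, hc2]
      linarith [hcore']
    rw [hzero] at hH
    exact hH
  show H t₁ = H t₂
  exact is_const_of_deriv_eq_zero (fun s => (key s).differentiableAt)
    (fun s => (key s).deriv) t₁ t₂
end

section
/- Let u : ℝ × ℝ → ℝ be a C^∞ function, 2π-periodic in its first argument, such that for every t the function u(·,t) belongs to E_N (i.e. u(x,t) = Σ_{0<|n|≤N} c_n(t) e^{inx} with c_{−n} = conj(c_n)), and suppose u solves ∂_t u + ∂_x³ u = ℙ_N( ℙ(u³) ∂_x u ) for all (x,t). Then the L²-norm is conserved: the function t ↦ ∫₀^{2π} u(x,t)² dx is constant on ℝ. -/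
open scoped Real

lemma periodic_deriv' (f : ℝ → ℝ) (c : ℝ) (hf : Function.Periodic f c) :
    Function.Periodic (deriv f) c := by
  intro x
  have h : (fun y => f (y + c)) = f := funext hf
  calc deriv f (x + c) = deriv (fun y => f (y + c)) x := (deriv_comp_add_const f c x).symm
  _ = deriv f x := by rw [h]

lemma integral_exp_eq_coef (w : ℝ → ℝ) (n : ℤ) :
    ∫ y in (0:ℝ)..(2*π), (w y:ℂ) * Complex.exp (Complex.I * n * y)
      = (2*(π:ℂ)) * fourierCoefOn w (-n) := by
  have hπ : (2*(π:ℂ)) ≠ 0 := by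
    simp [Real.pi_ne_zero, Complex.ofReal_ne_zero]
  have h : (fun y:ℝ => (w y:ℂ) * Complex.exp (-(Complex.I * ((-n : ℤ):ℂ) * y)))
      = fun y:ℝ => (w y:ℂ) * Complex.exp (Complex.I * n * y) := by
    funext y; congr 1; push_cast; ring
  rw [fourierCoefOn, h, ← mul_assoc, mul_one_div, div_self hπ, one_mul]

/-- **Conservation of the L² norm for the truncated gauge-transformed quartic gKdV.**
Let `u : ℝ × ℝ → ℝ` be `C^∞`, `2π`-periodic in its first argument, with `u(·,t) ∈ E_N`
(a real trigonometric polynomial with frequencies `0 < |n| ≤ N`) for every `t`, solving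
`∂ₜ u + ∂ₓ³ u = ℙ_N(ℙ(u³) ∂ₓ u)`.  Then `t ↦ ∫₀^{2π} u(x,t)² dx` is constant on `ℝ`. -/
theorem l2_conserved_truncated_gkdv (N : ℕ) (hN : 1 ≤ N) (u : ℝ → ℝ → ℝ)
    (hsmooth : ContDiff ℝ (⊤ : ℕ∞) (Function.uncurry u))
    (hper : ∀ x t : ℝ, u (x + 2 * π) t = u x t)
    (hEN : ∀ t x : ℝ, ((u x t : ℝ) : ℂ) =
      ∑ n ∈ (Finset.Icc (-(N : ℤ)) (N : ℤ)).erase 0,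
        fourierCoefOn (fun y => u y t) n * Complex.exp (Complex.I * n * x))
    (hPDE : ∀ x t : ℝ,
      ((deriv (fun s => u x s) t + iteratedDeriv 3 (fun y => u y t) x : ℝ) : ℂ) =
        ∑ n ∈ (Finset.Icc (-(N : ℤ)) (N : ℤ)).erase 0,
          fourierCoefOn (fun y =>
              (u y t ^ 3 - (1 / (2 * π)) * ∫ z in (0:ℝ)..(2 * π), u z t ^ 3) *
                deriv (fun w => u w t) y) n * Complex.exp (Complex.I * n * x)) :
    ∀ t₁ t₂ : ℝ,
      (∫ x in (0:ℝ)..(2 * π), u x t₁ ^ 2) = ∫ x in (0:ℝ)..(2 * π), u x t₂ ^ 2 := by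
  have h1top : ((⊤:ℕ∞) : WithTop ℕ∞) ≠ 0 := by simp
  have hUdiff : Differentiable ℝ (Function.uncurry u) := hsmooth.differentiable h1top
  set ut : ℝ → ℝ → ℝ := fun x t => fderiv ℝ (Function.uncurry u) (x, t) (0, 1) with hut_def
  -- time derivative
  have hut : ∀ x t, HasDerivAt (fun s => u x s) (ut x t) t := by
    intro x t
    have h1 : HasDerivAt (fun s : ℝ => ((x:ℝ), s)) ((0:ℝ), (1:ℝ)) t :=
      (hasDerivAt_const t x).prodMk (hasDerivAt_id t)
    exact ((hUdiff (x, t)).hasFDerivAt).comp_hasDerivAt t h1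
  -- smoothness of x-sections
  have hsx : ∀ t, ContDiff ℝ (⊤ : ℕ∞) (fun x => u x t) := fun t =>
    hsmooth.comp (contDiff_id.prodMk contDiff_const)
  have hcx : ∀ t, Continuous (fun x => u x t) := fun t => (hsx t).continuous
  have hdx : ∀ t, Differentiable ℝ (fun x => u x t) := fun t => (hsx t).differentiable h1top
  have hID : ∀ t n, ContDiff ℝ (⊤ : ℕ∞) (iteratedDeriv n (fun x => u x t)) := by
    intro t n
    rw [iteratedDeriv_eq_iterate]
    exact (hsx t).iterate_deriv n
  have hperx : ∀ t, Function.Periodic (fun x => u x t) (2 * π) := fun t x => hper x t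
  have hperID : ∀ t n, Function.Periodic (iteratedDeriv n (fun x => u x t)) (2 * π) := by
    intro t n
    induction n with
    | zero => simpa [iteratedDeriv_zero] using hperx t
    | succ k ih => rw [iteratedDeriv_succ]; exact periodic_deriv' _ _ ih
  have hderivP : ∀ t, Function.Periodic (deriv (fun x => u x t)) (2 * π) := by
    intro t; simpa [iteratedDeriv_one] using hperID t 1
  have hcd : ∀ t, Continuous (deriv (fun x => u x t)) := by
    intro t
    have := (hID t 1).continuous
    rwa [iteratedDeriv_one] at this
  -- joint continuity of ut
  have hcut : Continuous (fun p : ℝ × ℝ => fderiv ℝ (Function.uncurry u) p ((0:ℝ), (1:ℝ))) :=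
    (hsmooth.continuous_fderiv h1top).clm_apply continuous_const
  -- key: ∫ u * u''' = 0
  have hIBP : ∀ t, (∫ x in (0:ℝ)..(2*π), u x t * iteratedDeriv 3 (fun y => u y t) x) = 0 := by
    intro t
    set f : ℝ → ℝ := fun x => u x t with hf
    have hDf : ∀ n x, HasDerivAt (iteratedDeriv n f) (iteratedDeriv (n+1) f x) x := by
      intro n x
      rw [iteratedDeriv_succ]
      exact ((hID t n).differentiable h1top x).hasDerivAt
    have hDf0 : ∀ x, HasDerivAt f (deriv f x) x := fun x => (hdx t x).hasDerivAt
    have key : ∀ x, HasDerivAt (fun y => f y * iteratedDeriv 2 f y - (deriv f y)^2 / 2)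
        (f x * iteratedDeriv 3 f x) x := by
      intro x
      have h1 : HasDerivAt (fun y => f y * iteratedDeriv 2 f y)
          (deriv f x * iteratedDeriv 2 f x + f x * iteratedDeriv 3 f x) x :=
        (hDf0 x).mul (hDf 2 x)
      have h3 : HasDerivAt (deriv f) (iteratedDeriv 2 f x) x := by
        have := hDf 1 x
        rwa [iteratedDeriv_one] at this
      have h2 : HasDerivAt (fun y => (deriv f y)^2 / 2)
          ((2:ℕ) * (deriv f x)^1 * iteratedDeriv 2 f x / 2) x := (h3.pow 2).div_const 2
      have := h1.sub h2
      refine this.congr_deriv ?_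
      push_cast
      ring
    have hint : IntervalIntegrable (fun x => f x * iteratedDeriv 3 f x)
        MeasureTheory.volume 0 (2*π) := ((hcx t).mul (hID t 3).continuous).intervalIntegrable _ _
    rw [intervalIntegral.integral_eq_sub_of_hasDerivAt (fun x _ => key x) hint]
    have e1 : f (2*π) = f 0 := by simpa using hperx t 0
    have e2 : iteratedDeriv 2 f (2*π) = iteratedDeriv 2 f 0 := by simpa using hperID t 2 0
    have e3 : deriv f (2*π) = deriv f 0 := by simpa using hderivP t 0
    rw [e1, e2, e3, sub_self]
  -- the nonlinear part integrates to zero against u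
  have hNL : ∀ t, (∫ x in (0:ℝ)..(2*π),
      u x t * ((u x t ^ 3 - (1 / (2 * π)) * ∫ z in (0:ℝ)..(2 * π), u z t ^ 3) *
        deriv (fun w => u w t) x)) = 0 := by
    intro t
    set c : ℝ := (1 / (2 * π)) * ∫ z in (0:ℝ)..(2 * π), u z t ^ 3 with hc
    set f : ℝ → ℝ := fun x => u x t with hf
    have hDf0 : ∀ x, HasDerivAt f (deriv f x) x := fun x => (hdx t x).hasDerivAt
    have key : ∀ x, HasDerivAt (fun y => (f y)^5 / 5 - c * ((f y)^2 / 2))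
        (f x * ((f x ^ 3 - c) * deriv f x)) x := by
      intro x
      have h1 : HasDerivAt (fun y => (f y)^5 / 5)
          ((5:ℕ) * (f x)^4 * deriv f x / 5) x := ((hDf0 x).pow 5).div_const 5
      have h2 : HasDerivAt (fun y => c * ((f y)^2 / 2))
          (c * ((2:ℕ) * (f x)^1 * deriv f x / 2)) x :=
        (((hDf0 x).pow 2).div_const 2).const_mul c
      have := h1.sub h2
      refine this.congr_deriv ?_
      push_cast
      ring
    have hint : IntervalIntegrable (fun x => f x * ((f x ^ 3 - c) * deriv f x))
        MeasureTheory.volume 0 (2*π) :=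
      ((hcx t).mul ((((hcx t).pow 3).sub continuous_const).mul (hcd t))).intervalIntegrable _ _
    rw [intervalIntegral.integral_eq_sub_of_hasDerivAt (fun x _ => key x) hint]
    have e1 : f (2*π) = f 0 := by simpa using hperx t 0
    rw [e1, sub_self]
  -- Fourier duality step
  have hdual : ∀ t, (∫ x in (0:ℝ)..(2*π),
        u x t * (ut x t + iteratedDeriv 3 (fun y => u y t) x))
      = ∫ x in (0:ℝ)..(2*π),
        u x t * ((u x t ^ 3 - (1 / (2 * π)) * ∫ z in (0:ℝ)..(2 * π), u z t ^ 3) *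
          deriv (fun w => u w t) x) := by
    intro t
    set s : Finset ℤ := (Finset.Icc (-(N : ℤ)) (N : ℤ)).erase 0 with hs
    set g : ℝ → ℝ := fun y =>
      (u y t ^ 3 - (1 / (2 * π)) * ∫ z in (0:ℝ)..(2 * π), u z t ^ 3) *
        deriv (fun w => u w t) y with hg
    have hgc : Continuous g := (((hcx t).pow 3).sub continuous_const).mul (hcd t)
    have hexp : ∀ n : ℤ, Continuous (fun x : ℝ => Complex.exp (Complex.I * n * x)) := by
      intro n
      exact Complex.continuous_exp.comp (by continuity)
    -- LHS as complex
    have hB : ((∫ x in (0:ℝ)..(2*π),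
        u x t * (ut x t + iteratedDeriv 3 (fun y => u y t) x) : ℝ) : ℂ)
        = ∑ n ∈ s, fourierCoefOn g n *
            ((2*(π:ℂ)) * fourierCoefOn (fun y => u y t) (-n)) := by
      rw [← intervalIntegral.integral_ofReal]
      have step1 : ∀ x : ℝ, ((u x t * (ut x t + iteratedDeriv 3 (fun y => u y t) x) : ℝ) : ℂ)
          = ∑ n ∈ s, fourierCoefOn g n * ((u x t : ℂ) * Complex.exp (Complex.I * n * x)) := by
        intro x
        have h := hPDE x t
        rw [(hut x t).deriv] at h
        push_cast at h ⊢
        rw [h, Finset.mul_sum]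
        exact Finset.sum_congr rfl (fun n _ => by rw [hg]; ring)
      rw [intervalIntegral.integral_congr (fun x _ => step1 x)]
      rw [intervalIntegral.integral_finset_sum (fun n _ => by
        exact (continuous_const.mul ((Complex.continuous_ofReal.comp (hcx t)).mul
          (hexp n))).intervalIntegrable _ _)]
      refine Finset.sum_congr rfl (fun n _ => ?_)
      rw [intervalIntegral.integral_const_mul, integral_exp_eq_coef]
    -- RHS as complex
    have hC : ((∫ x in (0:ℝ)..(2*π), u x t * g x : ℝ) : ℂ)
        = ∑ n ∈ s, fourierCoefOn (fun y => u y t) n * ((2*(π:ℂ)) * fourierCoefOn g (-n)) := by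
      rw [← intervalIntegral.integral_ofReal]
      have step1 : ∀ x : ℝ, ((u x t * g x : ℝ) : ℂ)
          = ∑ n ∈ s, fourierCoefOn (fun y => u y t) n *
              ((g x : ℂ) * Complex.exp (Complex.I * n * x)) := by
        intro x
        push_cast
        rw [hEN t x, Finset.sum_mul]
        exact Finset.sum_congr rfl (fun n _ => by ring)
      rw [intervalIntegral.integral_congr (fun x _ => step1 x)]
      rw [intervalIntegral.integral_finset_sum (fun n _ => by
        exact (continuous_const.mul ((Complex.continuous_ofReal.comp hgc).mul
          (hexp n))).intervalIntegrable _ _)]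
      refine Finset.sum_congr rfl (fun n _ => ?_)
      rw [intervalIntegral.integral_const_mul, integral_exp_eq_coef]
    have hsum : ∑ n ∈ s, fourierCoefOn g n * ((2*(π:ℂ)) * fourierCoefOn (fun y => u y t) (-n))
        = ∑ n ∈ s, fourierCoefOn (fun y => u y t) n * ((2*(π:ℂ)) * fourierCoefOn g (-n)) := by
      refine Finset.sum_nbij' (fun n => -n) (fun n => -n) ?_ ?_ ?_ ?_ ?_
      · intro a ha
        simp only [hs, Finset.mem_erase, Finset.mem_Icc] at ha ⊢
        omega
      · intro a ha
        simp only [hs, Finset.mem_erase, Finset.mem_Icc] at ha ⊢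
        omega
      · intro a _; exact neg_neg a
      · intro a _; exact neg_neg a
      · intro a _
        rw [neg_neg]
        ring
    have : ((∫ x in (0:ℝ)..(2*π),
        u x t * (ut x t + iteratedDeriv 3 (fun y => u y t) x) : ℝ) : ℂ)
        = ((∫ x in (0:ℝ)..(2*π), u x t * g x : ℝ) : ℂ) := by
      rw [hB, hC, hsum]
    exact_mod_cast this
  -- hence ∫ u * ut = 0
  have hkey : ∀ t, (∫ x in (0:ℝ)..(2*π), u x t * ut x t) = 0 := by
    intro t
    have hint1 : IntervalIntegrable (fun x => u x t * ut x t) MeasureTheory.volume 0 (2*π) := by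
      have : Continuous (fun x => ut x t) :=
        hcut.comp (continuous_id.prodMk continuous_const)
      exact ((hcx t).mul this).intervalIntegrable _ _
    have hint2 : IntervalIntegrable (fun x => u x t * iteratedDeriv 3 (fun y => u y t) x)
        MeasureTheory.volume 0 (2*π) := ((hcx t).mul (hID t 3).continuous).intervalIntegrable _ _
    have expand : (∫ x in (0:ℝ)..(2*π), u x t * (ut x t + iteratedDeriv 3 (fun y => u y t) x))
        = (∫ x in (0:ℝ)..(2*π), u x t * ut x t)
          + ∫ x in (0:ℝ)..(2*π), u x t * iteratedDeriv 3 (fun y => u y t) x := by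
      rw [← intervalIntegral.integral_add hint1 hint2]
      exact intervalIntegral.integral_congr (fun x _ => by ring)
    have := hdual t
    rw [expand, hIBP t, add_zero, hNL t] at this
    exact this
  -- differentiation under the integral sign
  have hF : ∀ t₀ : ℝ, HasDerivAt (fun t => ∫ x in (0:ℝ)..(2*π), u x t ^ 2) 0 t₀ := by
    intro t₀
    have hφ : Continuous (fun p : ℝ × ℝ => 2 * u p.1 p.2 *
        fderiv ℝ (Function.uncurry u) p ((0:ℝ), (1:ℝ))) := by
      have h1 : Continuous (fun p : ℝ × ℝ => u p.1 p.2) := hsmooth.continuous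
      exact (continuous_const.mul h1).mul hcut
    obtain ⟨M, hM⟩ := (IsCompact.prod (isCompact_uIcc (a := (0:ℝ)) (b := 2*π))
        (isCompact_closedBall t₀ 1)).exists_bound_of_continuousOn hφ.continuousOn
    have main := intervalIntegral.hasDerivAt_integral_of_dominated_loc_of_deriv_le
      (F := fun t x => u x t ^ 2) (F' := fun t x => 2 * u x t * ut x t)
      (x₀ := t₀) (a := 0) (b := 2*π) (bound := fun _ => M) (s := Metric.ball t₀ 1) (μ := MeasureTheory.volume) (Metric.ball_mem_nhds t₀ one_pos)
      (Filter.Eventually.of_forall (fun s => ((hcx s).pow 2).aestronglyMeasurable))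
      (((hcx t₀).pow 2).intervalIntegrable _ _)
      (by
        have : Continuous (fun x => 2 * u x t₀ * ut x t₀) :=
          (continuous_const.mul (hcx t₀)).mul (hcut.comp (continuous_id.prodMk continuous_const))
        exact this.aestronglyMeasurable)
      (Filter.Eventually.of_forall (fun x hx s hs => by
        have hx' : x ∈ Set.uIcc (0:ℝ) (2*π) := Set.uIoc_subset_uIcc hx
        have hs' : s ∈ Metric.closedBall t₀ 1 := Metric.ball_subset_closedBall hs
        have := hM (x, s) (Set.mk_mem_prod hx' hs')
        simpa using this))
      (intervalIntegrable_const)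
      (Filter.Eventually.of_forall (fun x _ s _ => by
        have h := (hut x s).pow 2
        refine h.congr_deriv ?_
        push_cast
        ring))
    have h2 := main.2
    have : (∫ x in (0:ℝ)..(2*π), 2 * u x t₀ * ut x t₀) = 0 := by
      have expand : (∫ x in (0:ℝ)..(2*π), 2 * u x t₀ * ut x t₀)
          = 2 * ∫ x in (0:ℝ)..(2*π), u x t₀ * ut x t₀ := by
        rw [← intervalIntegral.integral_const_mul]
        exact intervalIntegral.integral_congr (fun x _ => by ring)
      rw [expand, hkey t₀, mul_zero]
    rwa [this] at h2
  intro t₁ t₂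
  exact is_const_of_deriv_eq_zero (fun t => (hF t).differentiableAt)
    (fun t => (hF t).deriv) t₁ t₂
end

section
/- The vector field of the truncated gauge-transformed quartic gKdV system is divergence-free: writing c_n = a_n + i b_n and viewing V := (Re F₁, …, Re F_N, Im F₁, …, Im F_N) as a map ℝ^{2N} → ℝ^{2N}, one has at every point of ℝ^{2N}: Σ_{n=1}^N ( ∂_{a_n} Re F_n + ∂_{b_n} Im F_n ) = 0; equivalently, the trace of the (Fréchet) derivative of V vanishes identically, so the flow of the system preserves Lebesgue measure. -/
/-- Extension of `c = (c₁, …, c_N) ∈ ℂ^N` to integer indices `m` with `0 < |m| ≤ N`,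
using the reality convention `c₋ₘ = conj cₘ` (and taking the value `0` for other `m`). -/
noncomputable def extendConj (N : ℕ) (c : Fin N → ℂ) (m : ℤ) : ℂ :=
  if h : 1 ≤ m ∧ m ≤ (N : ℤ) then c ⟨m.toNat - 1, by omega⟩
  else if h' : 1 ≤ -m ∧ -m ≤ (N : ℤ) then (starRingEnd ℂ) (c ⟨(-m).toNat - 1, by omega⟩)
  else 0

/-- The vector field of the truncated gauge-transformed quartic gKdV system:
`F_n(c) = -i n³ c_n - i Σ n₁ c_{n₁} c_{n₂} c_{n₃} c_{n₄}`, the sum over quadruples of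
integers `(n₁, n₂, n₃, n₄)` with `0 < |n_j| ≤ N`, `n₁ + n₂ + n₃ + n₄ = n` and `n₁ ≠ n`.
Here the index `n ∈ {1, …, N}` is represented by `n : Fin N` (so the frequency is `n + 1`). -/
noncomputable def gkdvF (N : ℕ) (c : Fin N → ℂ) (n : Fin N) : ℂ :=
  -Complex.I * (((n : ℕ) + 1 : ℤ) : ℂ) ^ 3 * c n -
    Complex.I *
      ∑ q ∈ (((Finset.Icc (-(N : ℤ)) (N : ℤ)).erase 0 ×ˢ
              (Finset.Icc (-(N : ℤ)) (N : ℤ)).erase 0 ×ˢ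
              (Finset.Icc (-(N : ℤ)) (N : ℤ)).erase 0 ×ˢ
              (Finset.Icc (-(N : ℤ)) (N : ℤ)).erase 0).filter
          (fun q : ℤ × ℤ × ℤ × ℤ =>
            q.1 + q.2.1 + q.2.2.1 + q.2.2.2 = ((n : ℕ) + 1 : ℤ) ∧
              q.1 ≠ ((n : ℕ) + 1 : ℤ))),
        (q.1 : ℂ) * extendConj N c q.1 * extendConj N c q.2.1 * extendConj N c q.2.2.1 *
          extendConj N c q.2.2.2

namespace GkdvAux
open Finset Complex

lemma extendConj_neg (N : ℕ) (c : Fin N → ℂ) (m : ℤ) :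
    extendConj N c (-m) = (starRingEnd ℂ) (extendConj N c m) := by
  unfold extendConj
  simp only [neg_neg]
  split_ifs with h1 h2 h3 <;> first | omega | simp

lemma extendConj_update (N : ℕ) (c : Fin N → ℂ) (n : Fin N) (v : ℂ) (m : ℤ) :
    extendConj N (Function.update c n v) m =
      if m = (n : ℤ) + 1 then v
      else if m = -((n : ℤ) + 1) then (starRingEnd ℂ) v
      else extendConj N c m := by
  have hn : (n : ℤ) < N := by exact_mod_cast n.isLt
  rcases eq_or_ne m ((n : ℤ) + 1) with rfl | hm1
  · rw [if_pos rfl]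
    unfold extendConj
    rw [dif_pos ⟨by omega, by omega⟩]
    have h : (⟨((n : ℤ) + 1).toNat - 1, by omega⟩ : Fin N) = n := by
      simp only [Fin.ext_iff]; omega
    rw [h, Function.update_self]
  · rw [if_neg hm1]
    rcases eq_or_ne m (-((n : ℤ) + 1)) with rfl | hm2
    · rw [if_pos rfl]
      unfold extendConj
      rw [dif_neg (by omega), dif_pos ⟨by omega, by omega⟩]
      have h : (⟨(-(-((n : ℤ) + 1))).toNat - 1, by omega⟩ : Fin N) = n := by
        simp only [Fin.ext_iff]; omega
      rw [h, Function.update_self]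
    · rw [if_neg hm2]
      unfold extendConj
      split_ifs with h1 h2
      · rw [Function.update_apply, if_neg (by simp [Fin.ext_iff]; omega)]
      · rw [Function.update_apply, if_neg (by simp [Fin.ext_iff]; omega)]
      · rfl


variable (N : ℕ) (c : Fin N → ℂ)

noncomputable def IS : Finset ℤ := (Finset.Icc (-(N : ℤ)) (N : ℤ)).erase 0

lemma mem_IS {m : ℤ} : m ∈ IS N ↔ m ≠ 0 ∧ -(N : ℤ) ≤ m ∧ m ≤ N := by
  simp [IS, Finset.mem_erase, Finset.mem_Icc, and_assoc]

noncomputable def TS : Finset (ℤ × ℤ × ℤ) :=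
  (IS N ×ˢ IS N ×ˢ IS N).filter fun t => t.1 + t.2.1 + t.2.2 = 0

lemma mem_TS {t : ℤ × ℤ × ℤ} :
    t ∈ TS N ↔ t.1 ∈ IS N ∧ t.2.1 ∈ IS N ∧ t.2.2 ∈ IS N ∧ t.1 + t.2.1 + t.2.2 = 0 := by
  simp [TS, Finset.mem_filter, Finset.mem_product, and_assoc]

noncomputable def trm (t : ℤ × ℤ × ℤ) : ℂ :=
  (t.1 : ℂ) * extendConj N c t.1 * extendConj N c t.2.1 * extendConj N c t.2.2

lemma B_zero : ∑ t ∈ TS N, trm N c t = 0 := by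
  have h12 : ∑ t ∈ TS N, trm N c t =
      ∑ t ∈ TS N, (t.2.1 : ℂ) * extendConj N c t.1 * extendConj N c t.2.1 * extendConj N c t.2.2 := by
    refine Finset.sum_nbij' (fun t => (t.2.1, t.1, t.2.2)) (fun t => (t.2.1, t.1, t.2.2))
      ?_ ?_ (fun t _ => rfl) (fun t _ => rfl) ?_
    · intro t ht; simp only [mem_TS] at ht ⊢; exact ⟨ht.2.1, ht.1, ht.2.2.1, by omega⟩
    · intro t ht; simp only [mem_TS] at ht ⊢; exact ⟨ht.2.1, ht.1, ht.2.2.1, by omega⟩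
    · intro t _; simp only [trm]; ring
  have h13 : ∑ t ∈ TS N, trm N c t =
      ∑ t ∈ TS N, (t.2.2 : ℂ) * extendConj N c t.1 * extendConj N c t.2.1 * extendConj N c t.2.2 := by
    refine Finset.sum_nbij' (fun t => (t.2.2, t.2.1, t.1)) (fun t => (t.2.2, t.2.1, t.1))
      ?_ ?_ (fun t _ => rfl) (fun t _ => rfl) ?_
    · intro t ht; simp only [mem_TS] at ht ⊢; exact ⟨ht.2.2.1, ht.2.1, ht.1, by omega⟩
    · intro t ht; simp only [mem_TS] at ht ⊢; exact ⟨ht.2.2.1, ht.2.1, ht.1, by omega⟩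
    · intro t _; simp only [trm]; ring
  have h3 : (∑ t ∈ TS N, trm N c t) + (∑ t ∈ TS N, trm N c t) + (∑ t ∈ TS N, trm N c t) = 0 := by
    nth_rewrite 2 [h12]
    nth_rewrite 2 [h13]
    rw [← Finset.sum_add_distrib, ← Finset.sum_add_distrib]
    apply Finset.sum_eq_zero
    intro t ht
    simp only [mem_TS] at ht
    have h0 : ((t.1 : ℂ) + t.2.1 + t.2.2) = 0 := by exact_mod_cast ht.2.2.2
    simp only [trm]
    linear_combination (extendConj N c t.1 * extendConj N c t.2.1 * extendConj N c t.2.2) * h0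
  have h3' : (3 : ℂ) * ∑ t ∈ TS N, trm N c t = 0 := by linear_combination h3
  exact (mul_eq_zero.mp h3').resolve_left (by norm_num)

lemma trm_neg (t : ℤ × ℤ × ℤ) :
    trm N c (-t.1, -t.2.1, -t.2.2) = -((starRingEnd ℂ) (trm N c t)) := by
  simp only [trm, extendConj_neg, map_mul, map_intCast]
  push_cast
  ring

lemma P_im_zero : (∑ t ∈ (TS N).filter (fun t => 1 ≤ t.1), trm N c t).im = 0 := by
  have hQ : ∑ t ∈ (TS N).filter (fun t => ¬ 1 ≤ t.1), trm N c t =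
      ∑ t ∈ (TS N).filter (fun t => 1 ≤ t.1), -((starRingEnd ℂ) (trm N c t)) := by
    refine Finset.sum_nbij' (fun t => (-t.1, -t.2.1, -t.2.2)) (fun t => (-t.1, -t.2.1, -t.2.2))
      ?_ ?_ (fun t _ => by simp) (fun t _ => by simp) ?_
    · intro t ht
      simp only [Finset.mem_filter, mem_TS, mem_IS] at ht ⊢
      refine ⟨⟨⟨by omega, by omega, by omega⟩, ⟨by omega, by omega, by omega⟩,
        ⟨by omega, by omega, by omega⟩, by omega⟩, by omega⟩
    · intro t ht
      simp only [Finset.mem_filter, mem_TS, mem_IS] at ht ⊢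
      refine ⟨⟨⟨by omega, by omega, by omega⟩, ⟨by omega, by omega, by omega⟩,
        ⟨by omega, by omega, by omega⟩, by omega⟩, by omega⟩
    · intro t _
      rw [trm_neg, map_neg, Complex.conj_conj, neg_neg]
  have hsplit := Finset.sum_filter_add_sum_filter_not (TS N) (fun t => 1 ≤ t.1) (trm N c)
  rw [B_zero] at hsplit
  rw [hQ, Finset.sum_neg_distrib, ← map_sum] at hsplit
  set P := ∑ t ∈ (TS N).filter (fun t => 1 ≤ t.1), trm N c t with hP
  have : (starRingEnd ℂ) P = P := by linear_combination -hsplit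
  exact Complex.conj_eq_iff_im.mp this

lemma fiber (hN : 1 ≤ N) :
    ∑ n : Fin N, ∑ t ∈ (TS N).filter (fun t => t.1 = (n : ℤ) + 1), trm N c t =
      ∑ t ∈ (TS N).filter (fun t => 1 ≤ t.1), trm N c t := by
  classical
  set g : ℤ × ℤ × ℤ → Fin N := fun t =>
    ⟨(t.1 - 1).toNat % N, Nat.mod_lt _ (by omega)⟩ with hg
  have hmaps : ∀ t ∈ (TS N).filter (fun t => 1 ≤ t.1), g t ∈ (Finset.univ : Finset (Fin N)) :=
    fun _ _ => Finset.mem_univ _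
  have hfib := Finset.sum_fiberwise_of_maps_to hmaps (trm N c)
  rw [← hfib]
  apply Finset.sum_congr rfl
  intro n _
  apply Finset.sum_congr _ (fun _ _ => rfl)
  rw [Finset.filter_filter]
  apply Finset.filter_congr
  intro t ht
  simp only [mem_TS, mem_IS] at ht
  obtain ⟨⟨ht1, ht2, ht3⟩, -⟩ := ht
  have hn : (n : ℕ) < N := n.isLt
  constructor
  · intro h
    have h1 : (1 : ℤ) ≤ t.1 := by omega
    refine ⟨h1, Fin.ext ?_⟩
    have hmod : (t.1 - 1).toNat % N = (t.1 - 1).toNat := Nat.mod_eq_of_lt (by omega)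
    simp only [hg]
    omega
  · rintro ⟨h1, h2⟩
    have h2' : (t.1 - 1).toNat % N = (n : ℕ) := congrArg Fin.val h2
    have hmod : (t.1 - 1).toNat % N = (t.1 - 1).toNat := Nat.mod_eq_of_lt (by omega)
    omega

noncomputable def QS (ν : ℤ) : Finset (ℤ × ℤ × ℤ × ℤ) :=
  (IS N ×ˢ IS N ×ˢ IS N ×ˢ IS N).filter fun q =>
    q.1 + q.2.1 + q.2.2.1 + q.2.2.2 = ν ∧ q.1 ≠ ν

lemma mem_QS {ν : ℤ} {q : ℤ × ℤ × ℤ × ℤ} :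
    q ∈ QS N ν ↔ q.1 ∈ IS N ∧ q.2.1 ∈ IS N ∧ q.2.2.1 ∈ IS N ∧ q.2.2.2 ∈ IS N ∧
      q.1 + q.2.1 + q.2.2.1 + q.2.2.2 = ν ∧ q.1 ≠ ν := by
  simp [QS, Finset.mem_filter, Finset.mem_product, and_assoc]

noncomputable def pp (ν m : ℤ) : ℂ := if m = ν then 1 else 0

noncomputable def GG (ν : ℤ) (q : ℤ × ℤ × ℤ × ℤ) : ℂ :=
  (q.1 : ℂ) *
    (pp ν q.1 * extendConj N c q.2.1 * extendConj N c q.2.2.1 * extendConj N c q.2.2.2 +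
     extendConj N c q.1 * pp ν q.2.1 * extendConj N c q.2.2.1 * extendConj N c q.2.2.2 +
     extendConj N c q.1 * extendConj N c q.2.1 * pp ν q.2.2.1 * extendConj N c q.2.2.2 +
     extendConj N c q.1 * extendConj N c q.2.1 * extendConj N c q.2.2.1 * pp ν q.2.2.2)

lemma sumG (ν : ℤ) (h1 : 1 ≤ ν) (h2 : ν ≤ (N : ℤ)) :
    ∑ q ∈ QS N ν, GG N c ν q = 3 * ∑ t ∈ (TS N).filter (fun t => t.1 ≠ ν), trm N c t := by
  have hν : ν ∈ IS N := by rw [mem_IS]; omega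
  have hsplit : ∀ q : ℤ × ℤ × ℤ × ℤ, GG N c ν q =
      (if q.1 = ν then (q.1 : ℂ) * extendConj N c q.2.1 * extendConj N c q.2.2.1 *
          extendConj N c q.2.2.2 else 0) +
      ((if q.2.1 = ν then (q.1 : ℂ) * extendConj N c q.1 * extendConj N c q.2.2.1 *
          extendConj N c q.2.2.2 else 0) +
      ((if q.2.2.1 = ν then (q.1 : ℂ) * extendConj N c q.1 * extendConj N c q.2.1 *
          extendConj N c q.2.2.2 else 0) +
      (if q.2.2.2 = ν then (q.1 : ℂ) * extendConj N c q.1 * extendConj N c q.2.1 *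
          extendConj N c q.2.2.1 else 0))) := by
    intro q
    simp only [GG, pp]
    split_ifs <;> ring
  calc ∑ q ∈ QS N ν, GG N c ν q
      = (∑ q ∈ QS N ν, if q.1 = ν then (q.1 : ℂ) * extendConj N c q.2.1 *
            extendConj N c q.2.2.1 * extendConj N c q.2.2.2 else 0) +
        ((∑ q ∈ QS N ν, if q.2.1 = ν then (q.1 : ℂ) * extendConj N c q.1 *
            extendConj N c q.2.2.1 * extendConj N c q.2.2.2 else 0) +
        ((∑ q ∈ QS N ν, if q.2.2.1 = ν then (q.1 : ℂ) * extendConj N c q.1 *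
            extendConj N c q.2.1 * extendConj N c q.2.2.2 else 0) +
        (∑ q ∈ QS N ν, if q.2.2.2 = ν then (q.1 : ℂ) * extendConj N c q.1 *
            extendConj N c q.2.1 * extendConj N c q.2.2.1 else 0))) := by
        rw [← Finset.sum_add_distrib, ← Finset.sum_add_distrib, ← Finset.sum_add_distrib]
        exact Finset.sum_congr rfl fun q _ => hsplit q
    _ = 3 * ∑ t ∈ (TS N).filter (fun t => t.1 ≠ ν), trm N c t := by
        have e1 : (∑ q ∈ QS N ν, if q.1 = ν then (q.1 : ℂ) * extendConj N c q.2.1 *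
            extendConj N c q.2.2.1 * extendConj N c q.2.2.2 else 0) = 0 := by
          apply Finset.sum_eq_zero
          intro q hq
          rw [mem_QS] at hq
          exact if_neg hq.2.2.2.2.2
        have e2 : (∑ q ∈ QS N ν, if q.2.1 = ν then (q.1 : ℂ) * extendConj N c q.1 *
            extendConj N c q.2.2.1 * extendConj N c q.2.2.2 else 0) =
            ∑ t ∈ (TS N).filter (fun t => t.1 ≠ ν), trm N c t := by
          rw [← Finset.sum_filter]
          refine Finset.sum_nbij' (fun q => (q.1, q.2.2.1, q.2.2.2))
            (fun t => (t.1, ν, t.2.1, t.2.2)) ?_ ?_ ?_ ?_ ?_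
          · intro q hq
            simp only [Finset.mem_filter, mem_QS, mem_TS] at hq ⊢
            obtain ⟨⟨m1, m2, m3, m4, hs, hne⟩, hq2⟩ := hq
            exact ⟨⟨m1, m3, m4, by omega⟩, hne⟩
          · intro t ht
            simp only [Finset.mem_filter, mem_QS, mem_TS] at ht ⊢
            obtain ⟨⟨m1, m2, m3, hs⟩, hne⟩ := ht
            exact ⟨⟨m1, hν, m2, m3, by omega, hne⟩, trivial⟩
          · intro q hq
            simp only [Finset.mem_filter] at hq
            rw [← hq.2]
          · intro t _
            rfl
          · intro q _
            rfl
        have e3 : (∑ q ∈ QS N ν, if q.2.2.1 = ν then (q.1 : ℂ) * extendConj N c q.1 *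
            extendConj N c q.2.1 * extendConj N c q.2.2.2 else 0) =
            ∑ t ∈ (TS N).filter (fun t => t.1 ≠ ν), trm N c t := by
          rw [← Finset.sum_filter]
          refine Finset.sum_nbij' (fun q => (q.1, q.2.1, q.2.2.2))
            (fun t => (t.1, t.2.1, ν, t.2.2)) ?_ ?_ ?_ ?_ ?_
          · intro q hq
            simp only [Finset.mem_filter, mem_QS, mem_TS] at hq ⊢
            obtain ⟨⟨m1, m2, m3, m4, hs, hne⟩, hq2⟩ := hq
            exact ⟨⟨m1, m2, m4, by omega⟩, hne⟩
          · intro t ht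
            simp only [Finset.mem_filter, mem_QS, mem_TS] at ht ⊢
            obtain ⟨⟨m1, m2, m3, hs⟩, hne⟩ := ht
            exact ⟨⟨m1, m2, hν, m3, by omega, hne⟩, trivial⟩
          · intro q hq
            simp only [Finset.mem_filter] at hq
            rw [← hq.2]
          · intro t _
            rfl
          · intro q _
            rfl
        have e4 : (∑ q ∈ QS N ν, if q.2.2.2 = ν then (q.1 : ℂ) * extendConj N c q.1 *
            extendConj N c q.2.1 * extendConj N c q.2.2.1 else 0) =
            ∑ t ∈ (TS N).filter (fun t => t.1 ≠ ν), trm N c t := by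
          rw [← Finset.sum_filter]
          refine Finset.sum_nbij' (fun q => (q.1, q.2.1, q.2.2.1))
            (fun t => (t.1, t.2.1, t.2.2, ν)) ?_ ?_ ?_ ?_ ?_
          · intro q hq
            simp only [Finset.mem_filter, mem_QS, mem_TS] at hq ⊢
            obtain ⟨⟨m1, m2, m3, m4, hs, hne⟩, hq2⟩ := hq
            exact ⟨⟨m1, m2, m3, by omega⟩, hne⟩
          · intro t ht
            simp only [Finset.mem_filter, mem_QS, mem_TS] at ht ⊢
            obtain ⟨⟨m1, m2, m3, hs⟩, hne⟩ := ht
            exact ⟨⟨m1, m2, m3, hν, by omega, hne⟩, trivial⟩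
          · intro q hq
            simp only [Finset.mem_filter] at hq
            rw [← hq.2]
          · intro t _
            rfl
          · intro q _
            rfl
        rw [e1, e2, e3, e4]
        ring

section Calc

variable (N : ℕ) (c : Fin N → ℂ) (n : Fin N)

lemma hasDerivAt_coe (x : ℝ) : HasDerivAt (fun s : ℝ => (s : ℂ)) 1 x := by
  simpa using (hasDerivAt_id x).ofReal_comp

lemma hasDerivAt_e_re (m : ℤ) :
    HasDerivAt (fun s : ℝ =>
        extendConj N (Function.update c n ((s : ℂ) + ((c n).im : ℂ) * Complex.I)) m)
      (pp (((n : ℕ) : ℤ) + 1) m + pp (-(((n : ℕ) : ℤ) + 1)) m) ((c n).re) := by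
  rcases eq_or_ne m (((n : ℕ) : ℤ) + 1) with rfl | h1
  · have hfun : (fun s : ℝ =>
        extendConj N (Function.update c n ((s : ℂ) + ((c n).im : ℂ) * Complex.I))
          (((n : ℕ) : ℤ) + 1)) =
        fun s : ℝ => (s : ℂ) + ((c n).im : ℂ) * Complex.I := by
      funext s
      rw [extendConj_update, if_pos rfl]
    have hp : pp (((n : ℕ) : ℤ) + 1) (((n : ℕ) : ℤ) + 1) +
        pp (-(((n : ℕ) : ℤ) + 1)) (((n : ℕ) : ℤ) + 1) = 1 := by
      rw [pp, pp, if_pos rfl, if_neg (by omega)]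
      ring
    rw [hfun, hp]
    exact (hasDerivAt_coe _).add_const _
  · rcases eq_or_ne m (-(((n : ℕ) : ℤ) + 1)) with rfl | h2
    · have hfun : (fun s : ℝ =>
          extendConj N (Function.update c n ((s : ℂ) + ((c n).im : ℂ) * Complex.I))
            (-(((n : ℕ) : ℤ) + 1))) =
          fun s : ℝ => (s : ℂ) - ((c n).im : ℂ) * Complex.I := by
        funext s
        rw [extendConj_update, if_neg (by omega), if_pos rfl]
        simp only [map_add, map_mul, Complex.conj_ofReal, Complex.conj_I, mul_neg,
          ← sub_eq_add_neg]
      have hp : pp (((n : ℕ) : ℤ) + 1) (-(((n : ℕ) : ℤ) + 1)) +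
          pp (-(((n : ℕ) : ℤ) + 1)) (-(((n : ℕ) : ℤ) + 1)) = 1 := by
        rw [pp, pp, if_pos rfl, if_neg (by omega)]
        ring
      rw [hfun, hp]
      exact (hasDerivAt_coe _).sub_const _
    · have hfun : (fun s : ℝ =>
          extendConj N (Function.update c n ((s : ℂ) + ((c n).im : ℂ) * Complex.I)) m) =
          fun _ : ℝ => extendConj N c m := by
        funext s
        rw [extendConj_update, if_neg h1, if_neg h2]
      have hp : pp (((n : ℕ) : ℤ) + 1) m + pp (-(((n : ℕ) : ℤ) + 1)) m = 0 := by
        rw [pp, pp, if_neg h1, if_neg h2]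
        ring
      rw [hfun, hp]
      exact hasDerivAt_const _ _

lemma hasDerivAt_e_im (m : ℤ) :
    HasDerivAt (fun t : ℝ =>
        extendConj N (Function.update c n (((c n).re : ℂ) + (t : ℂ) * Complex.I)) m)
      (Complex.I * pp (((n : ℕ) : ℤ) + 1) m - Complex.I * pp (-(((n : ℕ) : ℤ) + 1)) m)
      ((c n).im) := by
  rcases eq_or_ne m (((n : ℕ) : ℤ) + 1) with rfl | h1
  · have hfun : (fun t : ℝ =>
        extendConj N (Function.update c n (((c n).re : ℂ) + (t : ℂ) * Complex.I))
          (((n : ℕ) : ℤ) + 1)) =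
        fun t : ℝ => ((c n).re : ℂ) + (t : ℂ) * Complex.I := by
      funext t
      rw [extendConj_update, if_pos rfl]
    have hp : Complex.I * pp (((n : ℕ) : ℤ) + 1) (((n : ℕ) : ℤ) + 1) -
        Complex.I * pp (-(((n : ℕ) : ℤ) + 1)) (((n : ℕ) : ℤ) + 1) = Complex.I := by
      rw [pp, pp, if_pos rfl, if_neg (by omega)]
      ring
    rw [hfun, hp]
    simpa using ((hasDerivAt_coe ((c n).im)).mul_const Complex.I).const_add (((c n).re : ℂ))
  · rcases eq_or_ne m (-(((n : ℕ) : ℤ) + 1)) with rfl | h2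
    · have hfun : (fun t : ℝ =>
          extendConj N (Function.update c n (((c n).re : ℂ) + (t : ℂ) * Complex.I))
            (-(((n : ℕ) : ℤ) + 1))) =
          fun t : ℝ => ((c n).re : ℂ) - (t : ℂ) * Complex.I := by
        funext t
        rw [extendConj_update, if_neg (by omega), if_pos rfl]
        simp only [map_add, map_mul, Complex.conj_ofReal, Complex.conj_I, mul_neg,
          ← sub_eq_add_neg]
      have hp : Complex.I * pp (((n : ℕ) : ℤ) + 1) (-(((n : ℕ) : ℤ) + 1)) -
          Complex.I * pp (-(((n : ℕ) : ℤ) + 1)) (-(((n : ℕ) : ℤ) + 1)) = -Complex.I := by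
        rw [pp, pp, if_pos rfl, if_neg (by omega)]
        ring
      rw [hfun, hp]
      simpa using ((hasDerivAt_coe ((c n).im)).mul_const Complex.I).const_sub (((c n).re : ℂ))
    · have hfun : (fun t : ℝ =>
          extendConj N (Function.update c n (((c n).re : ℂ) + (t : ℂ) * Complex.I)) m) =
          fun _ : ℝ => extendConj N c m := by
        funext t
        rw [extendConj_update, if_neg h1, if_neg h2]
      have hp : Complex.I * pp (((n : ℕ) : ℤ) + 1) m -
          Complex.I * pp (-(((n : ℕ) : ℤ) + 1)) m = 0 := by
        rw [pp, pp, if_neg h1, if_neg h2]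
        ring
      rw [hfun, hp]
      exact hasDerivAt_const _ _

noncomputable def D1 (ν : ℤ) (q : ℤ × ℤ × ℤ × ℤ) : ℂ :=
  (q.1 : ℂ) *
    ((pp ν q.1 + pp (-ν) q.1) * extendConj N c q.2.1 * extendConj N c q.2.2.1 *
        extendConj N c q.2.2.2 +
      extendConj N c q.1 * (pp ν q.2.1 + pp (-ν) q.2.1) * extendConj N c q.2.2.1 *
        extendConj N c q.2.2.2 +
      extendConj N c q.1 * extendConj N c q.2.1 * (pp ν q.2.2.1 + pp (-ν) q.2.2.1) *
        extendConj N c q.2.2.2 +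
      extendConj N c q.1 * extendConj N c q.2.1 * extendConj N c q.2.2.1 *
        (pp ν q.2.2.2 + pp (-ν) q.2.2.2))

noncomputable def D2 (ν : ℤ) (q : ℤ × ℤ × ℤ × ℤ) : ℂ :=
  (q.1 : ℂ) *
    ((Complex.I * pp ν q.1 - Complex.I * pp (-ν) q.1) * extendConj N c q.2.1 *
        extendConj N c q.2.2.1 * extendConj N c q.2.2.2 +
      extendConj N c q.1 * (Complex.I * pp ν q.2.1 - Complex.I * pp (-ν) q.2.1) *
        extendConj N c q.2.2.1 * extendConj N c q.2.2.2 +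
      extendConj N c q.1 * extendConj N c q.2.1 *
        (Complex.I * pp ν q.2.2.1 - Complex.I * pp (-ν) q.2.2.1) * extendConj N c q.2.2.2 +
      extendConj N c q.1 * extendConj N c q.2.1 * extendConj N c q.2.2.1 *
        (Complex.I * pp ν q.2.2.2 - Complex.I * pp (-ν) q.2.2.2))

lemma key_ring (ν : ℤ) (q : ℤ × ℤ × ℤ × ℤ) :
    -Complex.I * D1 N c ν q - D2 N c ν q = -2 * Complex.I * GG N c ν q := by
  simp only [D1, D2, GG]
  ring

lemma hbase : Function.update c n (((c n).re : ℂ) + ((c n).im : ℂ) * Complex.I) = c := by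
  rw [Complex.re_add_im, Function.update_eq_self]

lemma hasDerivAt_summand_re (q : ℤ × ℤ × ℤ × ℤ) :
    HasDerivAt (fun s : ℝ =>
        (q.1 : ℂ) *
          extendConj N (Function.update c n ((s : ℂ) + ((c n).im : ℂ) * Complex.I)) q.1 *
          extendConj N (Function.update c n ((s : ℂ) + ((c n).im : ℂ) * Complex.I)) q.2.1 *
          extendConj N (Function.update c n ((s : ℂ) + ((c n).im : ℂ) * Complex.I)) q.2.2.1 *
          extendConj N (Function.update c n ((s : ℂ) + ((c n).im : ℂ) * Complex.I)) q.2.2.2)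
      (D1 N c (((n : ℕ) : ℤ) + 1) q) ((c n).re) := by
  have H := ((((hasDerivAt_e_re N c n q.1).const_mul ((q.1 : ℂ))).fun_mul
      (hasDerivAt_e_re N c n q.2.1)).fun_mul
      (hasDerivAt_e_re N c n q.2.2.1)).fun_mul
      (hasDerivAt_e_re N c n q.2.2.2)
  convert H using 1
  · rfl
  simp only [hbase, D1]
  ring

lemma hasDerivAt_summand_im (q : ℤ × ℤ × ℤ × ℤ) :
    HasDerivAt (fun t : ℝ =>
        (q.1 : ℂ) *
          extendConj N (Function.update c n (((c n).re : ℂ) + (t : ℂ) * Complex.I)) q.1 *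
          extendConj N (Function.update c n (((c n).re : ℂ) + (t : ℂ) * Complex.I)) q.2.1 *
          extendConj N (Function.update c n (((c n).re : ℂ) + (t : ℂ) * Complex.I)) q.2.2.1 *
          extendConj N (Function.update c n (((c n).re : ℂ) + (t : ℂ) * Complex.I)) q.2.2.2)
      (D2 N c (((n : ℕ) : ℤ) + 1) q) ((c n).im) := by
  have H := ((((hasDerivAt_e_im N c n q.1).const_mul ((q.1 : ℂ))).fun_mul
      (hasDerivAt_e_im N c n q.2.1)).fun_mul
      (hasDerivAt_e_im N c n q.2.2.1)).fun_mul
      (hasDerivAt_e_im N c n q.2.2.2)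
  convert H using 1
  · rfl
  simp only [hbase, D2]
  ring

lemma hasDerivAt_F_re :
    HasDerivAt (fun s : ℝ =>
        gkdvF N (Function.update c n ((s : ℂ) + ((c n).im : ℂ) * Complex.I)) n)
      (-Complex.I * ((((n : ℕ) + 1 : ℤ)) : ℂ) ^ 3 * 1 -
        Complex.I * ∑ q ∈ QS N (((n : ℕ) : ℤ) + 1), D1 N c (((n : ℕ) : ℤ) + 1) q)
      ((c n).re) := by
  have hfun : (fun s : ℝ =>
      gkdvF N (Function.update c n ((s : ℂ) + ((c n).im : ℂ) * Complex.I)) n) =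
      fun s : ℝ =>
        -Complex.I * ((((n : ℕ) + 1 : ℤ)) : ℂ) ^ 3 * ((s : ℂ) + ((c n).im : ℂ) * Complex.I) -
          Complex.I * ∑ q ∈ QS N (((n : ℕ) : ℤ) + 1),
            (q.1 : ℂ) *
              extendConj N (Function.update c n ((s : ℂ) + ((c n).im : ℂ) * Complex.I)) q.1 *
              extendConj N (Function.update c n ((s : ℂ) + ((c n).im : ℂ) * Complex.I)) q.2.1 *
              extendConj N (Function.update c n ((s : ℂ) + ((c n).im : ℂ) * Complex.I)) q.2.2.1 *
              extendConj N (Function.update c n ((s : ℂ) + ((c n).im : ℂ) * Complex.I)) q.2.2.2 := by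
    funext s
    simp only [gkdvF, QS, IS, Function.update_self]
  rw [hfun]
  have hlin : HasDerivAt (fun s : ℝ =>
      -Complex.I * ((((n : ℕ) + 1 : ℤ)) : ℂ) ^ 3 * ((s : ℂ) + ((c n).im : ℂ) * Complex.I))
      (-Complex.I * ((((n : ℕ) + 1 : ℤ)) : ℂ) ^ 3 * 1) ((c n).re) := by
    exact ((hasDerivAt_coe ((c n).re)).add_const (((c n).im : ℂ) * Complex.I)).const_mul
      (-Complex.I * ((((n : ℕ) + 1 : ℤ)) : ℂ) ^ 3)
  exact hlin.sub ((HasDerivAt.fun_sum fun q _ => hasDerivAt_summand_re N c n q).const_mul Complex.I)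

lemma hasDerivAt_F_im :
    HasDerivAt (fun t : ℝ =>
        gkdvF N (Function.update c n (((c n).re : ℂ) + (t : ℂ) * Complex.I)) n)
      (-Complex.I * ((((n : ℕ) + 1 : ℤ)) : ℂ) ^ 3 * Complex.I -
        Complex.I * ∑ q ∈ QS N (((n : ℕ) : ℤ) + 1), D2 N c (((n : ℕ) : ℤ) + 1) q)
      ((c n).im) := by
  have hfun : (fun t : ℝ =>
      gkdvF N (Function.update c n (((c n).re : ℂ) + (t : ℂ) * Complex.I)) n) =
      fun t : ℝ =>
        -Complex.I * ((((n : ℕ) + 1 : ℤ)) : ℂ) ^ 3 * (((c n).re : ℂ) + (t : ℂ) * Complex.I) -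
          Complex.I * ∑ q ∈ QS N (((n : ℕ) : ℤ) + 1),
            (q.1 : ℂ) *
              extendConj N (Function.update c n (((c n).re : ℂ) + (t : ℂ) * Complex.I)) q.1 *
              extendConj N (Function.update c n (((c n).re : ℂ) + (t : ℂ) * Complex.I)) q.2.1 *
              extendConj N (Function.update c n (((c n).re : ℂ) + (t : ℂ) * Complex.I)) q.2.2.1 *
              extendConj N (Function.update c n (((c n).re : ℂ) + (t : ℂ) * Complex.I)) q.2.2.2 := by
    funext t
    simp only [gkdvF, QS, IS, Function.update_self]
  rw [hfun]
  have hlin : HasDerivAt (fun t : ℝ =>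
      -Complex.I * ((((n : ℕ) + 1 : ℤ)) : ℂ) ^ 3 * (((c n).re : ℂ) + (t : ℂ) * Complex.I))
      (-Complex.I * ((((n : ℕ) + 1 : ℤ)) : ℂ) ^ 3 * Complex.I) ((c n).im) := by
    have h' := (((hasDerivAt_coe ((c n).im)).mul_const Complex.I).const_add
      (((c n).re : ℂ))).const_mul (-Complex.I * ((((n : ℕ) + 1 : ℤ)) : ℂ) ^ 3)
    rwa [one_mul] at h'
  exact hlin.sub ((HasDerivAt.fun_sum fun q _ => hasDerivAt_summand_im N c n q).const_mul Complex.I)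

lemma deriv_re {F : ℝ → ℂ} {F' : ℂ} {x : ℝ} (h : HasDerivAt F F' x) :
    deriv (fun s => (F s).re) x = F'.re := by
  have := (Complex.reCLM.hasFDerivAt (x := F x)).comp_hasDerivAt x h
  exact this.deriv

lemma deriv_im {F : ℝ → ℂ} {F' : ℂ} {x : ℝ} (h : HasDerivAt F F' x) :
    deriv (fun s => (F s).im) x = F'.im := by
  have := (Complex.imCLM.hasFDerivAt (x := F x)).comp_hasDerivAt x h
  exact this.deriv

lemma re_im_comb (x y : ℂ) : x.re + y.im = (x - Complex.I * y).re := by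
  simp [Complex.sub_re, Complex.mul_re, Complex.I_re, Complex.I_im]

lemma per_n (n : Fin N) :
    deriv (fun s : ℝ =>
        (gkdvF N (Function.update c n ((s : ℂ) + ((c n).im : ℂ) * Complex.I)) n).re)
        ((c n).re) +
      deriv (fun s : ℝ =>
        (gkdvF N (Function.update c n (((c n).re : ℂ) + (s : ℂ) * Complex.I)) n).im)
        ((c n).im) =
      -6 * (∑ t ∈ (TS N).filter (fun t => t.1 = ((n : ℕ) : ℤ) + 1), trm N c t).im := by
  have h1 := deriv_re (hasDerivAt_F_re N c n)
  have h2 := deriv_im (hasDerivAt_F_im N c n)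
  rw [h1, h2, re_im_comb]
  have hνN : ((n : ℕ) : ℤ) + 1 ≤ (N : ℤ) := by
    have := n.isLt
    omega
  have hc :
      (-Complex.I * ((((n : ℕ) + 1 : ℤ)) : ℂ) ^ 3 * 1 -
          Complex.I * ∑ q ∈ QS N (((n : ℕ) : ℤ) + 1), D1 N c (((n : ℕ) : ℤ) + 1) q) -
        Complex.I * (-Complex.I * ((((n : ℕ) + 1 : ℤ)) : ℂ) ^ 3 * Complex.I -
          Complex.I * ∑ q ∈ QS N (((n : ℕ) : ℤ) + 1), D2 N c (((n : ℕ) : ℤ) + 1) q) =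
      -2 * Complex.I * ((((n : ℕ) + 1 : ℤ)) : ℂ) ^ 3 +
        ∑ q ∈ QS N (((n : ℕ) : ℤ) + 1),
          (-Complex.I * D1 N c (((n : ℕ) : ℤ) + 1) q - D2 N c (((n : ℕ) : ℤ) + 1) q) := by
    rw [Finset.sum_sub_distrib, ← Finset.mul_sum]
    linear_combination (Complex.I * ((((n : ℕ) + 1 : ℤ)) : ℂ) ^ 3 +
      ∑ q ∈ QS N (((n : ℕ) : ℤ) + 1), D2 N c (((n : ℕ) : ℤ) + 1) q) * Complex.I_mul_I
  rw [hc]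
  have h3 : ∑ q ∈ QS N (((n : ℕ) : ℤ) + 1),
      (-Complex.I * D1 N c (((n : ℕ) : ℤ) + 1) q - D2 N c (((n : ℕ) : ℤ) + 1) q) =
      -2 * Complex.I * (3 * ∑ t ∈ (TS N).filter (fun t => t.1 ≠ ((n : ℕ) : ℤ) + 1),
        trm N c t) := by
    rw [← sumG N c (((n : ℕ) : ℤ) + 1) (by omega) hνN, Finset.mul_sum]
    exact Finset.sum_congr rfl fun q _ => key_ring N c _ q
  rw [h3]
  have h4 : ∑ t ∈ (TS N).filter (fun t => t.1 ≠ ((n : ℕ) : ℤ) + 1), trm N c t =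
      -∑ t ∈ (TS N).filter (fun t => t.1 = ((n : ℕ) : ℤ) + 1), trm N c t := by
    have h := Finset.sum_filter_add_sum_filter_not (TS N)
      (fun t => t.1 = ((n : ℕ) : ℤ) + 1) (trm N c)
    rw [B_zero] at h
    simp only [ne_eq]
    linear_combination h
  rw [h4]
  have hμim : (((((n : ℕ) + 1 : ℤ)) : ℂ) ^ 3).im = 0 := by
    rw [show ((((n : ℕ) + 1 : ℤ)) : ℂ) ^ 3 = ((((n : ℕ) + 1 : ℤ) ^ 3 : ℤ) : ℂ) from by
      push_cast; ring, Complex.intCast_im]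
  simp only [Complex.add_re, Complex.mul_re, Complex.mul_im, Complex.I_re, Complex.I_im,
    Complex.neg_re, Complex.neg_im, Complex.re_ofNat, Complex.im_ofNat, Complex.ofReal_re,
    hμim, Complex.neg_im]
  ring

end Calc

end GkdvAux

/-- **The truncated gauge-transformed quartic gKdV vector field is divergence-free.**
Writing `c_n = a_n + i b_n`, at every point of `ℝ^{2N} ≅ ℂ^N` one has
`Σ_{n=1}^N ( ∂_{a_n} Re F_n + ∂_{b_n} Im F_n ) = 0`. -/
theorem gkdv_vector_field_divergence_free (N : ℕ) (hN : 1 ≤ N) (c : Fin N → ℂ) :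
    ∑ n : Fin N,
      (deriv (fun s : ℝ =>
          (gkdvF N (Function.update c n ((s : ℂ) + ((c n).im : ℂ) * Complex.I)) n).re)
          ((c n).re) +
       deriv (fun s : ℝ =>
          (gkdvF N (Function.update c n (((c n).re : ℂ) + (s : ℂ) * Complex.I)) n).im)
          ((c n).im)) = 0 := by
  have hstep : ∀ n : Fin N,
      deriv (fun s : ℝ =>
          (gkdvF N (Function.update c n ((s : ℂ) + ((c n).im : ℂ) * Complex.I)) n).re)
          ((c n).re) +
        deriv (fun s : ℝ =>
          (gkdvF N (Function.update c n (((c n).re : ℂ) + (s : ℂ) * Complex.I)) n).im)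
          ((c n).im) =
      -6 * (∑ t ∈ (GkdvAux.TS N).filter (fun t => t.1 = ((n : ℕ) : ℤ) + 1),
        GkdvAux.trm N c t).im := fun n => GkdvAux.per_n N c n
  rw [Finset.sum_congr rfl fun n _ => hstep n]
  have : ∑ n : Fin N, -6 * (∑ t ∈ (GkdvAux.TS N).filter (fun t => t.1 = ((n : ℕ) : ℤ) + 1),
      GkdvAux.trm N c t).im =
      -6 * (∑ n : Fin N, ∑ t ∈ (GkdvAux.TS N).filter (fun t => t.1 = ((n : ℕ) : ℤ) + 1),
        GkdvAux.trm N c t).im := by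
    rw [← Finset.mul_sum, Complex.im_sum]
  rw [this, GkdvAux.fiber N c hN, GkdvAux.P_im_zero]
  ring
end

section
/- Let n, n₁, n₂, n₃, n₄ be nonzero integers with n = n₁ + n₂ + n₃ + n₄. Suppose there exist distinct indices k ≠ j in {1,2,3,4} such that n_k ∈ {n, −n₁} and n_j ∈ {n, −n₁}, where in addition n_k = n is required if k = 1 and n_j = n is required if j = 1. Then |n³ − n₁³ − n₂³ − n₃³ − n₄³| ≥ (3/2) · max(|n|, |n₁|, |n₂|, |n₃|, |n₄|)². -/
lemma fin4_mk_two (h : (2:ℕ) < 4) : (⟨2, h⟩ : Fin 4) = 2 := rfl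
lemma fin4_mk_three (h : (3:ℕ) < 4) : (⟨3, h⟩ : Fin 4) = 3 := rfl

lemma cube_key (a b c : ℤ) (ha : a ≠ 0) (hb : b ≠ 0) (hc : c ≠ 0) (h : a + b + c = 0) :
    (max |a| (max |b| |c|))^2 ≤ 2 * (|a| * |b| * |c|) := by
  have h1 : 1 ≤ |a| := Int.one_le_abs ha
  have h2 : 1 ≤ |b| := Int.one_le_abs hb
  have h3 : 1 ≤ |c| := Int.one_le_abs hc
  have e1 : |a| ≤ |b| + |c| := by
    calc |a| = |(-b) + (-c)| := by rw [show a = -b + -c by linarith]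
    _ ≤ |(-b)| + |(-c)| := abs_add_le _ _
    _ = |b| + |c| := by rw [abs_neg, abs_neg]
  have e2 : |b| ≤ |a| + |c| := by
    calc |b| = |(-a) + (-c)| := by rw [show b = -a + -c by linarith]
    _ ≤ |(-a)| + |(-c)| := abs_add_le _ _
    _ = |a| + |c| := by rw [abs_neg, abs_neg]
  have e3 : |c| ≤ |a| + |b| := by
    calc |c| = |(-a) + (-b)| := by rw [show c = -a + -b by linarith]
    _ ≤ |(-a)| + |(-b)| := abs_add_le _ _
    _ = |a| + |b| := by rw [abs_neg, abs_neg]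
  have f1 : |b| + |c| ≤ 2 * (|b| * |c|) := by nlinarith
  have f2 : |a| + |c| ≤ 2 * (|a| * |c|) := by nlinarith
  have f3 : |a| + |b| ≤ 2 * (|a| * |b|) := by nlinarith
  rcases max_cases |a| (max |b| |c|) with ⟨hm, _⟩ | ⟨hm, _⟩
  · rw [hm]
    nlinarith [mul_le_mul_of_nonneg_left f1 (abs_nonneg a),
      mul_le_mul_of_nonneg_left e1 (abs_nonneg a)]
  · rcases max_cases |b| |c| with ⟨hm2, _⟩ | ⟨hm2, _⟩ <;> rw [hm, hm2]
    · nlinarith [mul_le_mul_of_nonneg_left f2 (abs_nonneg b),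
        mul_le_mul_of_nonneg_left e2 (abs_nonneg b)]
    · nlinarith [mul_le_mul_of_nonneg_left f3 (abs_nonneg c),
        mul_le_mul_of_nonneg_left e3 (abs_nonneg c)]

lemma key5 (a b c : ℤ) (ha : a ≠ 0) (hb : b ≠ 0) (hc : c ≠ 0) (h : a + b + c = 0)
    (M S : ℤ) (hM : M ≤ max |a| (max |b| |c|)) (hM0 : 0 ≤ M)
    (hS : S = 3 * (a * b * c) ∨ S = -(3 * (a * b * c))) :
    (3/2 : ℝ) * (M : ℝ)^2 ≤ ((|S| : ℤ) : ℝ) := by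
  have habs : |S| = 3 * (|a| * |b| * |c|) := by
    rcases hS with rfl | rfl <;> simp [abs_mul]
  have hk := cube_key a b c ha hb hc h
  have hsq : M^2 ≤ (max |a| (max |b| |c|))^2 := pow_le_pow_left₀ hM0 hM 2
  have hz : 3 * M^2 ≤ 2 * |S| := by rw [habs]; nlinarith
  have hr : (3 * (M:ℝ)^2) ≤ 2 * ((|S| : ℤ) : ℝ) := by exact_mod_cast hz
  linarith


lemma mem3 {x a b c : ℤ} (h : |x| = |a| ∨ |x| = |b| ∨ |x| = |c|) :
    |x| ≤ max |a| (max |b| |c|) := by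
  rcases h with h | h | h <;> rw [h]
  · exact le_max_left _ _
  · exact le_trans (le_max_left _ _) (le_max_right _ _)
  · exact le_trans (le_max_right _ _) (le_max_right _ _)

lemma max5_le {x1 x2 x3 x4 x5 a b c : ℤ}
    (m1 : |x1| = |a| ∨ |x1| = |b| ∨ |x1| = |c|)
    (m2 : |x2| = |a| ∨ |x2| = |b| ∨ |x2| = |c|)
    (m3 : |x3| = |a| ∨ |x3| = |b| ∨ |x3| = |c|)
    (m4 : |x4| = |a| ∨ |x4| = |b| ∨ |x4| = |c|)
    (m5 : |x5| = |a| ∨ |x5| = |b| ∨ |x5| = |c|) :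
    max |x1| (max |x2| (max |x3| (max |x4| |x5|))) ≤ max |a| (max |b| |c|) :=
  max_le (mem3 m1) (max_le (mem3 m2) (max_le (mem3 m3) (max_le (mem3 m4) (mem3 m5))))


/-- **Degenerate frequency quadruples are non-resonant.**
Let `n, n₁, n₂, n₃, n₄` be nonzero integers with `n = n₁ + n₂ + n₃ + n₄`.  Suppose there are
distinct indices `k ≠ j` in `{1,2,3,4}` with `n_k ∈ {n, -n₁}` and `n_j ∈ {n, -n₁}` (where
`n_k = n` is required if `k = 1`, and `n_j = n` is required if `j = 1`).  Then
`|n³ - n₁³ - n₂³ - n₃³ - n₄³| ≥ (3/2) · max(|n|,|n₁|,|n₂|,|n₃|,|n₄|)²`. -/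
theorem zeta_two_nonresonant (n n₁ n₂ n₃ n₄ : ℤ)
    (hn : n ≠ 0) (h1 : n₁ ≠ 0) (h2 : n₂ ≠ 0) (h3 : n₃ ≠ 0) (h4 : n₄ ≠ 0)
    (hsum : n = n₁ + n₂ + n₃ + n₄)
    (hdeg : ∃ k j : Fin 4, k ≠ j ∧
      (![n₁, n₂, n₃, n₄] k = n ∨ ![n₁, n₂, n₃, n₄] k = -n₁) ∧
      (![n₁, n₂, n₃, n₄] j = n ∨ ![n₁, n₂, n₃, n₄] j = -n₁) ∧
      (k = 0 → ![n₁, n₂, n₃, n₄] k = n) ∧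
      (j = 0 → ![n₁, n₂, n₃, n₄] j = n)) :
    (3 / 2 : ℝ) * ((max |n| (max |n₁| (max |n₂| (max |n₃| |n₄|))) : ℤ) : ℝ) ^ 2 ≤
      ((|n ^ 3 - n₁ ^ 3 - n₂ ^ 3 - n₃ ^ 3 - n₄ ^ 3| : ℤ) : ℝ) := by
  obtain ⟨k, j, hkj, hk, hj, hk0, hj0⟩ := hdeg
  fin_cases k <;> fin_cases j <;>
    simp only [fin4_mk_two, fin4_mk_three, Matrix.cons_val_zero, Matrix.cons_val_one,
      Matrix.head_cons, Matrix.cons_val_two, Matrix.tail_cons, Matrix.cons_val_three,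
      Matrix.head_fin_const, Fin.mk_zero, Fin.mk_one, ne_eq, not_true_eq_false,
      forall_true_left, Fin.isValue] at hkj hk hj hk0 hj0 ⊢
  · rcases hj with e | e
    · have hz : n + n₃ + n₄ = 0 := by linarith
      refine key5 (n) (n₃) (n₄) hn h3 h4 hz _ _ (max5_le (Or.inl rfl) (Or.inl (by rw [hk0])) (Or.inl (by rw [e])) (Or.inr (Or.inl rfl)) (Or.inr (Or.inr rfl))) (le_trans (abs_nonneg n) (le_max_left _ _)) ?_
      right
      rw [e, hk0]
      linear_combination (-(n^2 + n₃^2 + n₄^2 - (n)*(n₃) - (n₃)*(n₄) - (n)*(n₄))) * hz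
    · have hz : (-n) + n₃ + n₄ = 0 := by linarith
      refine key5 ((-n)) (n₃) (n₄) (neg_ne_zero.mpr hn) h3 h4 hz _ _ (max5_le (Or.inl (abs_neg n).symm) (Or.inl (by rw [hk0, abs_neg])) (Or.inl (by rw [e, hk0])) (Or.inr (Or.inl rfl)) (Or.inr (Or.inr rfl))) (le_trans (abs_nonneg n) (le_max_left _ _)) ?_
      right
      rw [e, hk0]
      linear_combination (-((-n)^2 + n₃^2 + n₄^2 - ((-n))*(n₃) - (n₃)*(n₄) - ((-n))*(n₄))) * hz
  · rcases hj with e | e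
    · have hz : n + n₂ + n₄ = 0 := by linarith
      refine key5 (n) (n₂) (n₄) hn h2 h4 hz _ _ (max5_le (Or.inl rfl) (Or.inl (by rw [hk0])) (Or.inr (Or.inl rfl)) (Or.inl (by rw [e])) (Or.inr (Or.inr rfl))) (le_trans (abs_nonneg n) (le_max_left _ _)) ?_
      right
      rw [e, hk0]
      linear_combination (-(n^2 + n₂^2 + n₄^2 - (n)*(n₂) - (n₂)*(n₄) - (n)*(n₄))) * hz
    · have hz : (-n) + n₂ + n₄ = 0 := by linarith
      refine key5 ((-n)) (n₂) (n₄) (neg_ne_zero.mpr hn) h2 h4 hz _ _ (max5_le (Or.inl (abs_neg n).symm) (Or.inl (by rw [hk0, abs_neg])) (Or.inr (Or.inl rfl)) (Or.inl (by rw [e, hk0])) (Or.inr (Or.inr rfl))) (le_trans (abs_nonneg n) (le_max_left _ _)) ?_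
      right
      rw [e, hk0]
      linear_combination (-((-n)^2 + n₂^2 + n₄^2 - ((-n))*(n₂) - (n₂)*(n₄) - ((-n))*(n₄))) * hz
  · rcases hj with e | e
    · have hz : n + n₂ + n₃ = 0 := by linarith
      refine key5 (n) (n₂) (n₃) hn h2 h3 hz _ _ (max5_le (Or.inl rfl) (Or.inl (by rw [hk0])) (Or.inr (Or.inl rfl)) (Or.inr (Or.inr rfl)) (Or.inl (by rw [e]))) (le_trans (abs_nonneg n) (le_max_left _ _)) ?_
      right
      rw [e, hk0]
      linear_combination (-(n^2 + n₂^2 + n₃^2 - (n)*(n₂) - (n₂)*(n₃) - (n)*(n₃))) * hz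
    · have hz : (-n) + n₂ + n₃ = 0 := by linarith
      refine key5 ((-n)) (n₂) (n₃) (neg_ne_zero.mpr hn) h2 h3 hz _ _ (max5_le (Or.inl (abs_neg n).symm) (Or.inl (by rw [hk0, abs_neg])) (Or.inr (Or.inl rfl)) (Or.inr (Or.inr rfl)) (Or.inl (by rw [e, hk0]))) (le_trans (abs_nonneg n) (le_max_left _ _)) ?_
      right
      rw [e, hk0]
      linear_combination (-((-n)^2 + n₂^2 + n₃^2 - ((-n))*(n₂) - (n₂)*(n₃) - ((-n))*(n₃))) * hz
  · rcases hk with e | e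
    · have hz : n + n₃ + n₄ = 0 := by linarith
      refine key5 (n) (n₃) (n₄) hn h3 h4 hz _ _ (max5_le (Or.inl rfl) (Or.inl (by rw [hj0])) (Or.inl (by rw [e])) (Or.inr (Or.inl rfl)) (Or.inr (Or.inr rfl))) (le_trans (abs_nonneg n) (le_max_left _ _)) ?_
      right
      rw [e, hj0]
      linear_combination (-(n^2 + n₃^2 + n₄^2 - (n)*(n₃) - (n₃)*(n₄) - (n)*(n₄))) * hz
    · have hz : (-n) + n₃ + n₄ = 0 := by linarith
      refine key5 ((-n)) (n₃) (n₄) (neg_ne_zero.mpr hn) h3 h4 hz _ _ (max5_le (Or.inl (abs_neg n).symm) (Or.inl (by rw [hj0, abs_neg])) (Or.inl (by rw [e, hj0])) (Or.inr (Or.inl rfl)) (Or.inr (Or.inr rfl))) (le_trans (abs_nonneg n) (le_max_left _ _)) ?_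
      right
      rw [e, hj0]
      linear_combination (-((-n)^2 + n₃^2 + n₄^2 - ((-n))*(n₃) - (n₃)*(n₄) - ((-n))*(n₄))) * hz
  · rcases hk with ek | ek <;> rcases hj with ej | ej
    · have hz : n + n₁ + n₄ = 0 := by linarith
      refine key5 (n) (n₁) (n₄) hn h1 h4 hz _ _ (max5_le (Or.inl rfl) (Or.inr (Or.inl rfl)) (Or.inl (by rw [ek])) (Or.inl (by rw [ej])) (Or.inr (Or.inr rfl))) (le_trans (abs_nonneg n) (le_max_left _ _)) ?_
      right
      rw [ek, ej]
      linear_combination (-(n^2 + n₁^2 + n₄^2 - (n)*(n₁) - (n₁)*(n₄) - (n)*(n₄))) * hz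
    · exact absurd (show n₄ = 0 by linarith) h4
    · exact absurd (show n₄ = 0 by linarith) h4
    · have hz : n + n₁ + (-n₄) = 0 := by linarith
      refine key5 (n) (n₁) ((-n₄)) hn h1 (neg_ne_zero.mpr h4) hz _ _ (max5_le (Or.inl rfl) (Or.inr (Or.inl rfl)) (Or.inr (Or.inl (by rw [ek, abs_neg]))) (Or.inr (Or.inl (by rw [ej, abs_neg]))) (Or.inr (Or.inr (abs_neg n₄).symm))) (le_trans (abs_nonneg n) (le_max_left _ _)) ?_
      left
      rw [ek, ej]
      linear_combination (n^2 + n₁^2 + (-n₄)^2 - (n)*(n₁) - (n₁)*((-n₄)) - (n)*((-n₄))) * hz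
  · rcases hk with ek | ek <;> rcases hj with ej | ej
    · have hz : n + n₁ + n₃ = 0 := by linarith
      refine key5 (n) (n₁) (n₃) hn h1 h3 hz _ _ (max5_le (Or.inl rfl) (Or.inr (Or.inl rfl)) (Or.inl (by rw [ek])) (Or.inr (Or.inr rfl)) (Or.inl (by rw [ej]))) (le_trans (abs_nonneg n) (le_max_left _ _)) ?_
      right
      rw [ek, ej]
      linear_combination (-(n^2 + n₁^2 + n₃^2 - (n)*(n₁) - (n₁)*(n₃) - (n)*(n₃))) * hz
    · exact absurd (show n₃ = 0 by linarith) h3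
    · exact absurd (show n₃ = 0 by linarith) h3
    · have hz : n + n₁ + (-n₃) = 0 := by linarith
      refine key5 (n) (n₁) ((-n₃)) hn h1 (neg_ne_zero.mpr h3) hz _ _ (max5_le (Or.inl rfl) (Or.inr (Or.inl rfl)) (Or.inr (Or.inl (by rw [ek, abs_neg]))) (Or.inr (Or.inr (abs_neg n₃).symm)) (Or.inr (Or.inl (by rw [ej, abs_neg])))) (le_trans (abs_nonneg n) (le_max_left _ _)) ?_
      left
      rw [ek, ej]
      linear_combination (n^2 + n₁^2 + (-n₃)^2 - (n)*(n₁) - (n₁)*((-n₃)) - (n)*((-n₃))) * hz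
  · rcases hk with e | e
    · have hz : n + n₂ + n₄ = 0 := by linarith
      refine key5 (n) (n₂) (n₄) hn h2 h4 hz _ _ (max5_le (Or.inl rfl) (Or.inl (by rw [hj0])) (Or.inr (Or.inl rfl)) (Or.inl (by rw [e])) (Or.inr (Or.inr rfl))) (le_trans (abs_nonneg n) (le_max_left _ _)) ?_
      right
      rw [e, hj0]
      linear_combination (-(n^2 + n₂^2 + n₄^2 - (n)*(n₂) - (n₂)*(n₄) - (n)*(n₄))) * hz
    · have hz : (-n) + n₂ + n₄ = 0 := by linarith
      refine key5 ((-n)) (n₂) (n₄) (neg_ne_zero.mpr hn) h2 h4 hz _ _ (max5_le (Or.inl (abs_neg n).symm) (Or.inl (by rw [hj0, abs_neg])) (Or.inr (Or.inl rfl)) (Or.inl (by rw [e, hj0])) (Or.inr (Or.inr rfl))) (le_trans (abs_nonneg n) (le_max_left _ _)) ?_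
      right
      rw [e, hj0]
      linear_combination (-((-n)^2 + n₂^2 + n₄^2 - ((-n))*(n₂) - (n₂)*(n₄) - ((-n))*(n₄))) * hz
  · rcases hj with ek | ek <;> rcases hk with ej | ej
    · have hz : n + n₁ + n₄ = 0 := by linarith
      refine key5 (n) (n₁) (n₄) hn h1 h4 hz _ _ (max5_le (Or.inl rfl) (Or.inr (Or.inl rfl)) (Or.inl (by rw [ek])) (Or.inl (by rw [ej])) (Or.inr (Or.inr rfl))) (le_trans (abs_nonneg n) (le_max_left _ _)) ?_
      right
      rw [ek, ej]
      linear_combination (-(n^2 + n₁^2 + n₄^2 - (n)*(n₁) - (n₁)*(n₄) - (n)*(n₄))) * hz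
    · exact absurd (show n₄ = 0 by linarith) h4
    · exact absurd (show n₄ = 0 by linarith) h4
    · have hz : n + n₁ + (-n₄) = 0 := by linarith
      refine key5 (n) (n₁) ((-n₄)) hn h1 (neg_ne_zero.mpr h4) hz _ _ (max5_le (Or.inl rfl) (Or.inr (Or.inl rfl)) (Or.inr (Or.inl (by rw [ek, abs_neg]))) (Or.inr (Or.inl (by rw [ej, abs_neg]))) (Or.inr (Or.inr (abs_neg n₄).symm))) (le_trans (abs_nonneg n) (le_max_left _ _)) ?_
      left
      rw [ek, ej]
      linear_combination (n^2 + n₁^2 + (-n₄)^2 - (n)*(n₁) - (n₁)*((-n₄)) - (n)*((-n₄))) * hz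
  · rcases hk with ek | ek <;> rcases hj with ej | ej
    · have hz : n + n₁ + n₂ = 0 := by linarith
      refine key5 (n) (n₁) (n₂) hn h1 h2 hz _ _ (max5_le (Or.inl rfl) (Or.inr (Or.inl rfl)) (Or.inr (Or.inr rfl)) (Or.inl (by rw [ek])) (Or.inl (by rw [ej]))) (le_trans (abs_nonneg n) (le_max_left _ _)) ?_
      right
      rw [ek, ej]
      linear_combination (-(n^2 + n₁^2 + n₂^2 - (n)*(n₁) - (n₁)*(n₂) - (n)*(n₂))) * hz
    · exact absurd (show n₂ = 0 by linarith) h2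
    · exact absurd (show n₂ = 0 by linarith) h2
    · have hz : n + n₁ + (-n₂) = 0 := by linarith
      refine key5 (n) (n₁) ((-n₂)) hn h1 (neg_ne_zero.mpr h2) hz _ _ (max5_le (Or.inl rfl) (Or.inr (Or.inl rfl)) (Or.inr (Or.inr (abs_neg n₂).symm)) (Or.inr (Or.inl (by rw [ek, abs_neg]))) (Or.inr (Or.inl (by rw [ej, abs_neg])))) (le_trans (abs_nonneg n) (le_max_left _ _)) ?_
      left
      rw [ek, ej]
      linear_combination (n^2 + n₁^2 + (-n₂)^2 - (n)*(n₁) - (n₁)*((-n₂)) - (n)*((-n₂))) * hz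
  · rcases hk with e | e
    · have hz : n + n₂ + n₃ = 0 := by linarith
      refine key5 (n) (n₂) (n₃) hn h2 h3 hz _ _ (max5_le (Or.inl rfl) (Or.inl (by rw [hj0])) (Or.inr (Or.inl rfl)) (Or.inr (Or.inr rfl)) (Or.inl (by rw [e]))) (le_trans (abs_nonneg n) (le_max_left _ _)) ?_
      right
      rw [e, hj0]
      linear_combination (-(n^2 + n₂^2 + n₃^2 - (n)*(n₂) - (n₂)*(n₃) - (n)*(n₃))) * hz
    · have hz : (-n) + n₂ + n₃ = 0 := by linarith
      refine key5 ((-n)) (n₂) (n₃) (neg_ne_zero.mpr hn) h2 h3 hz _ _ (max5_le (Or.inl (abs_neg n).symm) (Or.inl (by rw [hj0, abs_neg])) (Or.inr (Or.inl rfl)) (Or.inr (Or.inr rfl)) (Or.inl (by rw [e, hj0]))) (le_trans (abs_nonneg n) (le_max_left _ _)) ?_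
      right
      rw [e, hj0]
      linear_combination (-((-n)^2 + n₂^2 + n₃^2 - ((-n))*(n₂) - (n₂)*(n₃) - ((-n))*(n₃))) * hz
  · rcases hj with ek | ek <;> rcases hk with ej | ej
    · have hz : n + n₁ + n₃ = 0 := by linarith
      refine key5 (n) (n₁) (n₃) hn h1 h3 hz _ _ (max5_le (Or.inl rfl) (Or.inr (Or.inl rfl)) (Or.inl (by rw [ek])) (Or.inr (Or.inr rfl)) (Or.inl (by rw [ej]))) (le_trans (abs_nonneg n) (le_max_left _ _)) ?_
      right
      rw [ek, ej]
      linear_combination (-(n^2 + n₁^2 + n₃^2 - (n)*(n₁) - (n₁)*(n₃) - (n)*(n₃))) * hz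
    · exact absurd (show n₃ = 0 by linarith) h3
    · exact absurd (show n₃ = 0 by linarith) h3
    · have hz : n + n₁ + (-n₃) = 0 := by linarith
      refine key5 (n) (n₁) ((-n₃)) hn h1 (neg_ne_zero.mpr h3) hz _ _ (max5_le (Or.inl rfl) (Or.inr (Or.inl rfl)) (Or.inr (Or.inl (by rw [ek, abs_neg]))) (Or.inr (Or.inr (abs_neg n₃).symm)) (Or.inr (Or.inl (by rw [ej, abs_neg])))) (le_trans (abs_nonneg n) (le_max_left _ _)) ?_
      left
      rw [ek, ej]
      linear_combination (n^2 + n₁^2 + (-n₃)^2 - (n)*(n₁) - (n₁)*((-n₃)) - (n)*((-n₃))) * hz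
  · rcases hj with ek | ek <;> rcases hk with ej | ej
    · have hz : n + n₁ + n₂ = 0 := by linarith
      refine key5 (n) (n₁) (n₂) hn h1 h2 hz _ _ (max5_le (Or.inl rfl) (Or.inr (Or.inl rfl)) (Or.inr (Or.inr rfl)) (Or.inl (by rw [ek])) (Or.inl (by rw [ej]))) (le_trans (abs_nonneg n) (le_max_left _ _)) ?_
      right
      rw [ek, ej]
      linear_combination (-(n^2 + n₁^2 + n₂^2 - (n)*(n₁) - (n₁)*(n₂) - (n)*(n₂))) * hz
    · exact absurd (show n₂ = 0 by linarith) h2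
    · exact absurd (show n₂ = 0 by linarith) h2
    · have hz : n + n₁ + (-n₂) = 0 := by linarith
      refine key5 (n) (n₁) ((-n₂)) hn h1 (neg_ne_zero.mpr h2) hz _ _ (max5_le (Or.inl rfl) (Or.inr (Or.inl rfl)) (Or.inr (Or.inr (abs_neg n₂).symm)) (Or.inr (Or.inl (by rw [ek, abs_neg]))) (Or.inr (Or.inl (by rw [ej, abs_neg])))) (le_trans (abs_nonneg n) (le_max_left _ _)) ?_
      left
      rw [ek, ej]
      linear_combination (n^2 + n₁^2 + (-n₂)^2 - (n)*(n₁) - (n₁)*((-n₂)) - (n)*((-n₂))) * hz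
end

section
/- Let n, n₁, n₂, n₃, n₄ be nonzero integers with n = n₁ + n₂ + n₃ + n₄ and n₂ = −n₃, and assume max(|n|, |n₁|, |n₄|) = max(|n|, |n₁|, |n₂|, |n₃|, |n₄|). Then n³ − n₁³ − n₂³ − n₃³ − n₄³ = 3 n n₁ n₄, and consequently |n³ − n₁³ − n₂³ − n₃³ − n₄³| ≥ (3/2) · max(|n|, |n₁|, |n₂|, |n₃|, |n₄|)². -/
private lemma aux_sq_le (a b c : ℤ) (ha : 1 ≤ a) (hb : 1 ≤ b) (hc : 1 ≤ c)
    (h : a ≤ b + c) : a ^ 2 ≤ 2 * (a * (b * c)) := by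
  nlinarith [mul_nonneg (mul_nonneg (by linarith : (0:ℤ) ≤ a) (by linarith : (0:ℤ) ≤ b - 1))
    (by linarith : (0:ℤ) ≤ c - 1), mul_le_mul_of_nonneg_left h (by linarith : (0:ℤ) ≤ a)]

/-- **Cancelling pairs are non-resonant.**
Let `n, n₁, n₂, n₃, n₄` be nonzero integers with `n = n₁ + n₂ + n₃ + n₄` and `n₂ = -n₃`,
and assume `max(|n|,|n₁|,|n₄|)` equals the overall maximum `max(|n|,|n₁|,|n₂|,|n₃|,|n₄|)`.
Then `n³ - n₁³ - n₂³ - n₃³ - n₄³ = 3 n n₁ n₄` and consequently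
`|n³ - n₁³ - n₂³ - n₃³ - n₄³| ≥ (3/2) · max(|n|,|n₁|,|n₂|,|n₃|,|n₄|)²`. -/
theorem cancelling_pair_nonresonant (n n₁ n₂ n₃ n₄ : ℤ)
    (hn : n ≠ 0) (h1 : n₁ ≠ 0) (h2 : n₂ ≠ 0) (h3 : n₃ ≠ 0) (h4 : n₄ ≠ 0)
    (hsum : n = n₁ + n₂ + n₃ + n₄) (h23 : n₂ = -n₃)
    (hmax : max |n| (max |n₁| |n₄|) = max |n| (max |n₁| (max |n₂| (max |n₃| |n₄|)))) :
    n ^ 3 - n₁ ^ 3 - n₂ ^ 3 - n₃ ^ 3 - n₄ ^ 3 = 3 * n * n₁ * n₄ ∧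
    (3 / 2 : ℝ) * ((max |n| (max |n₁| (max |n₂| (max |n₃| |n₄|))) : ℤ) : ℝ) ^ 2 ≤
      ((|n ^ 3 - n₁ ^ 3 - n₂ ^ 3 - n₃ ^ 3 - n₄ ^ 3| : ℤ) : ℝ) := by
  have hsum' : n = n₁ + n₄ := by rw [hsum, h23]; ring
  have hid : n ^ 3 - n₁ ^ 3 - n₂ ^ 3 - n₃ ^ 3 - n₄ ^ 3 = 3 * n * n₁ * n₄ := by
    rw [hsum', h23]; ring
  refine ⟨hid, ?_⟩
  set M : ℤ := max |n| (max |n₁| (max |n₂| (max |n₃| |n₄|))) with hM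
  have ha : (1 : ℤ) ≤ |n| := Int.one_le_abs (by exact_mod_cast hn)
  have hb : (1 : ℤ) ≤ |n₁| := Int.one_le_abs (by exact_mod_cast h1)
  have hc : (1 : ℤ) ≤ |n₄| := Int.one_le_abs (by exact_mod_cast h4)
  have hab : |n| ≤ |n₁| + |n₄| := by rw [hsum']; exact abs_add_le _ _
  have hbc : |n₁| ≤ |n| + |n₄| := by
    have : n₁ = n - n₄ := by omega
    rw [this]; exact abs_sub _ _
  have hca : |n₄| ≤ |n| + |n₁| := by
    have : n₄ = n - n₁ := by omega
    rw [this]; exact abs_sub _ _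
  have hkey : M ^ 2 ≤ 2 * (|n| * (|n₁| * |n₄|)) := by
    have hM' : M = max |n| (max |n₁| |n₄|) := hmax.symm
    rcases max_cases |n₁| |n₄| with ⟨e, _⟩ | ⟨e, _⟩ <;>
      rcases max_cases |n| (max |n₁| |n₄|) with ⟨f, _⟩ | ⟨f, _⟩ <;>
      rw [e] at f <;> rw [hM', e, f]
    · exact aux_sq_le _ _ _ ha hb hc hab
    · have := aux_sq_le _ _ _ hb ha hc (by linarith [hbc])
      linarith [this, mul_comm |n| (|n₁| * |n₄|)]
    · exact aux_sq_le _ _ _ ha hb hc hab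
    · have := aux_sq_le _ _ _ hc ha hb (by linarith [hca])
      nlinarith [this]
  have h3abs : |n ^ 3 - n₁ ^ 3 - n₂ ^ 3 - n₃ ^ 3 - n₄ ^ 3| = 3 * (|n| * (|n₁| * |n₄|)) := by
    rw [hid, abs_mul, abs_mul, abs_mul]
    simp [mul_assoc]
  rw [h3abs]
  have hcast : ((M : ℤ) : ℝ) ^ 2 ≤ 2 * ((|n| : ℝ) * ((|n₁| : ℝ) * (|n₄| : ℝ))) := by
    exact_mod_cast hkey
  push_cast
  nlinarith [hcast]
end

section
/- Let u : ℝ × ℝ → ℝ be a C^∞ function, 2π-periodic in its first argument, solving the quartic generalized KdV equation ∂_t u + ∂_x³ u = u³ ∂_x u for all (x,t). Define a(t) := ∫₀^t (1/2π) ∫₀^{2π} u(y,s)³ dy ds and v(x,t) := u(x − a(t), t). Then v is C^∞ and 2π-periodic in x, v(x,0) = u(x,0) for all x, and v solves the gauge-transformed equation ∂_t v + ∂_x³ v = ( v³ − (1/2π) ∫₀^{2π} v(y,t)³ dy ) · ∂_x v for all (x,t). -/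
open MeasureTheory Function Metric intervalIntegral
open scoped ContDiff

/-- Partial derivative in the second variable, as an application of the full derivative. -/
private lemma hasDerivAt_snd (F : ℝ → ℝ → ℝ) (hF : ContDiff ℝ (⊤ : ℕ∞) (uncurry F))
    (y x : ℝ) :
    HasDerivAt (fun x' => F y x') (fderiv ℝ (uncurry F) (y, x) (0, 1)) x := by
  have h := (hF.differentiable (by simp) (y, x)).hasFDerivAt
  have h2 : HasDerivAt (fun x' : ℝ => ((y : ℝ), x')) ((0 : ℝ), (1 : ℝ)) x :=
    (hasDerivAt_const x y).prodMk (hasDerivAt_id x)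
  exact h.comp_hasDerivAt x h2

private lemma contDiff_D (F : ℝ → ℝ → ℝ) (hF : ContDiff ℝ (⊤ : ℕ∞) (uncurry F)) :
    ContDiff ℝ (⊤ : ℕ∞) (fun p : ℝ × ℝ => fderiv ℝ (uncurry F) p (0, 1)) :=
  (hF.fderiv_right (by exact_mod_cast le_top)).clm_apply contDiff_const

/-- Differentiation under the interval integral, for smooth integrands. -/
private lemma hasDerivAt_parametric (F : ℝ → ℝ → ℝ) (hF : ContDiff ℝ (⊤ : ℕ∞) (uncurry F))
    (a b x₀ : ℝ) :
    HasDerivAt (fun x => ∫ y in a..b, F y x)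
      (∫ y in a..b, fderiv ℝ (uncurry F) (y, x₀) (0, 1)) x₀ := by
  set D : ℝ × ℝ → ℝ := fun p => fderiv ℝ (uncurry F) p (0, 1) with hD
  have hDc : Continuous D := (contDiff_D F hF).continuous
  obtain ⟨C, hC⟩ : ∃ C, ∀ p ∈ (Set.uIcc a b ×ˢ closedBall x₀ 1), ‖D p‖ ≤ C :=
    ((isCompact_uIcc).prod (isCompact_closedBall x₀ 1)).exists_bound_of_continuousOn
      hDc.continuousOn
  have key := intervalIntegral.hasDerivAt_integral_of_dominated_loc_of_deriv_le
    (F := fun x y => F y x) (F' := fun x y => D (y, x)) (x₀ := x₀) (a := a) (b := b)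
    (μ := volume) (bound := fun _ => C) (ball_mem_nhds x₀ one_pos)
    (Filter.Eventually.of_forall fun x =>
      (hF.continuous.comp (continuous_id.prodMk continuous_const)).aestronglyMeasurable)
    ((hF.continuous.comp (continuous_id.prodMk continuous_const)).intervalIntegrable a b)
    ((hDc.comp (continuous_id.prodMk continuous_const)).aestronglyMeasurable)
    (Filter.Eventually.of_forall fun y hy x hx =>
      hC (y, x) ⟨Set.uIoc_subset_uIcc hy, ball_subset_closedBall hx⟩)
    (intervalIntegrable_const)
    (Filter.Eventually.of_forall fun y _ x _ => hasDerivAt_snd F hF y x)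
  exact key.2

/-- Smoothness of a parametric interval integral of a smooth integrand. -/
private lemma contDiff_parametric : ∀ (n : ℕ) (F : ℝ → ℝ → ℝ),
    ContDiff ℝ (⊤ : ℕ∞) (uncurry F) → ∀ a b : ℝ,
    ContDiff ℝ n (fun x => ∫ y in a..b, F y x) := by
  intro n
  induction n with
  | zero =>
    intro F hF a b
    rw [show ((0 : ℕ) : WithTop ℕ∞) = 0 by norm_cast, contDiff_zero]
    exact intervalIntegral.continuous_parametric_intervalIntegral_of_continuous'
      (f := fun x y => F y x) (hF.continuous.comp continuous_swap) a b
  | succ n ih =>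
    intro F hF a b
    rw [show ((n + 1 : ℕ) : WithTop ℕ∞) = (n : WithTop ℕ∞) + 1 by norm_cast,
      contDiff_succ_iff_deriv]
    refine ⟨fun x => (hasDerivAt_parametric F hF a b x).differentiableAt, ?_, ?_⟩
    · intro h; exact absurd h (by exact_mod_cast (by simp : ((n : WithTop ℕ∞)) ≠ ⊤))
    · have : deriv (fun x => ∫ y in a..b, F y x)
          = fun x => ∫ y in a..b, (fun y' x' => fderiv ℝ (uncurry F) (y', x') (0, 1)) y x := by
        funext x
        exact (hasDerivAt_parametric F hF a b x).deriv
      rw [this]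
      exact ih _ (by exact contDiff_D F hF) a b

/-- **The gauge transformation for the periodic quartic gKdV.**
Let `u : ℝ × ℝ → ℝ` be `C^∞`, `2π`-periodic in its first argument, solving
`∂ₜ u + ∂ₓ³ u = u³ ∂ₓ u`.  Let `a t = ∫₀ᵗ (1/2π) ∫₀^{2π} u(y,s)³ dy ds` and
`v x t = u (x - a t) t`.  Then `v` is `C^∞`, `2π`-periodic in `x`, has the same initial
data, and solves `∂ₜ v + ∂ₓ³ v = (v³ - (1/2π)∫₀^{2π} v³ dy) ∂ₓ v`. -/
theorem gauge_transformation_gkdv (u : ℝ → ℝ → ℝ)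
    (hsmooth : ContDiff ℝ (⊤ : ℕ∞) (Function.uncurry u))
    (hper : ∀ x t : ℝ, u (x + 2 * Real.pi) t = u x t)
    (hPDE : ∀ x t : ℝ,
      deriv (fun s => u x s) t + iteratedDeriv 3 (fun y => u y t) x =
        u x t ^ 3 * deriv (fun y => u y t) x)
    (v : ℝ → ℝ → ℝ)
    (hv : ∀ x t : ℝ, v x t =
      u (x - ∫ s in (0:ℝ)..t, (1 / (2 * Real.pi)) * ∫ y in (0:ℝ)..(2 * Real.pi), u y s ^ 3) t) :
    ContDiff ℝ (⊤ : ℕ∞) (Function.uncurry v) ∧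
    (∀ x t : ℝ, v (x + 2 * Real.pi) t = v x t) ∧
    (∀ x : ℝ, v x 0 = u x 0) ∧
    (∀ x t : ℝ,
      deriv (fun s => v x s) t + iteratedDeriv 3 (fun y => v y t) x =
        (v x t ^ 3 - (1 / (2 * Real.pi)) * ∫ y in (0:ℝ)..(2 * Real.pi), v y t ^ 3) *
          deriv (fun y => v y t) x) := by
  -- the mean of `u³` and its time primitive
  set c : ℝ → ℝ := fun s => (1 / (2 * Real.pi)) * ∫ y in (0:ℝ)..(2 * Real.pi), u y s ^ 3 with hc
  set a : ℝ → ℝ := fun t => ∫ s in (0:ℝ)..t, c s with ha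
  have hvu : ∀ x t : ℝ, v x t = u (x - a t) t := hv
  -- smoothness of the cubed function
  have hcube : ContDiff ℝ (⊤ : ℕ∞) (uncurry fun y s => u y s ^ 3) := by
    have : (uncurry fun y s : ℝ => u y s ^ 3) = fun p => (uncurry u p) ^ 3 := rfl
    rw [this]; exact hsmooth.pow 3
  -- smoothness of `c`
  have hcsmooth : ContDiff ℝ (⊤ : ℕ∞) c := by
    have hI : ContDiff ℝ (⊤ : ℕ∞)
        (fun s => ∫ y in (0:ℝ)..(2 * Real.pi), u y s ^ 3) := by
      rw [show ((⊤ : ℕ∞) : WithTop ℕ∞) = ∞ from rfl, contDiff_infty]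
      intro n
      exact contDiff_parametric n (fun y s => u y s ^ 3) hcube 0 (2 * Real.pi)
    exact contDiff_const.mul hI
  have hccont : Continuous c := hcsmooth.continuous
  -- `a` has derivative `c`
  have ha' : ∀ t : ℝ, HasDerivAt a (c t) t := by
    intro t
    exact intervalIntegral.integral_hasDerivAt_right (hccont.intervalIntegrable 0 t)
      (hccont.stronglyMeasurableAtFilter _ _) hccont.continuousAt
  have hadiff : Differentiable ℝ a := fun t => (ha' t).differentiableAt
  have haderiv : deriv a = c := funext fun t => (ha' t).deriv
  have hasmooth : ContDiff ℝ (⊤ : ℕ∞) a := by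
    rw [show ((⊤ : ℕ∞) : WithTop ℕ∞) = ∞ from rfl, contDiff_infty_iff_deriv, haderiv]
    exact ⟨hadiff, hcsmooth⟩
  have ha0 : a 0 = 0 := intervalIntegral.integral_same
  -- smoothness of v
  have hvsmooth : ContDiff ℝ (⊤ : ℕ∞) (Function.uncurry v) := by
    have : Function.uncurry v = (Function.uncurry u) ∘ (fun p : ℝ × ℝ => (p.1 - a p.2, p.2)) := by
      funext p
      simp [Function.uncurry, hvu p.1 p.2]
    rw [this]
    exact hsmooth.comp ((contDiff_fst.sub (hasmooth.comp contDiff_snd)).prodMk contDiff_snd)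
  -- periodicity of u in x, as `Function.Periodic`
  have hperiodic : ∀ t : ℝ, Function.Periodic (fun y => u y t ^ 3) (2 * Real.pi) := by
    intro t y; simp [hper y t]
  -- periodicity of v
  have hvper : ∀ x t : ℝ, v (x + 2 * Real.pi) t = v x t := by
    intro x t
    rw [hvu, hvu]
    have : x + 2 * Real.pi - a t = (x - a t) + 2 * Real.pi := by ring
    rw [this, hper]
  -- the mean of v³ equals the mean of u³
  have hmean : ∀ t : ℝ, (∫ y in (0:ℝ)..(2 * Real.pi), v y t ^ 3)
      = ∫ y in (0:ℝ)..(2 * Real.pi), u y t ^ 3 := by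
    intro t
    have h1 : (∫ y in (0:ℝ)..(2 * Real.pi), v y t ^ 3)
        = ∫ y in (0:ℝ)..(2 * Real.pi), (fun z => u z t ^ 3) (y - a t) := by
      congr 1; funext y; rw [hvu]
    rw [h1, intervalIntegral.integral_comp_sub_right (fun z => u z t ^ 3) (a t)]
    have h2 := (hperiodic t).intervalIntegral_add_eq (0 - a t) 0
    simpa [zero_add, sub_eq_add_neg, add_comm, add_left_comm] using h2
  refine ⟨hvsmooth, hvper, ?_, ?_⟩
  · intro x; rw [hvu, ha0, sub_zero]
  · intro x t
    set b := a t with hb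
    set z := x - b with hz
    -- spatial derivatives of v are those of u translated
    have hshift : ∀ n : ℕ, iteratedDeriv n (fun y => v y t) x
        = iteratedDeriv n (fun y => u y t) z := by
      intro n
      have h1 : (fun y => v y t) = fun y => (fun w => u w t) (y + -b) := by
        funext y; rw [hvu]; ring_nf; rfl
      rw [h1, iteratedDeriv_comp_add_const n (fun w => u w t) (-b)]
      show iteratedDeriv n (fun w => u w t) (x + -b) = _
      rw [show x + -b = z by rw [hz]; ring]
    have hderivx : deriv (fun y => v y t) x = deriv (fun y => u y t) z := by
      have := hshift 1
      rwa [iteratedDeriv_one, iteratedDeriv_one] at this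
    -- time derivative of v
    have hut : HasDerivAt (fun s => u z s) (fderiv ℝ (uncurry u) (z, t) (0, 1)) t :=
      hasDerivAt_snd u hsmooth z t
    have hux : HasDerivAt (fun y => u y t) (fderiv ℝ (uncurry u) (z, t) (1, 0)) z := by
      have h := (hsmooth.differentiable (by simp) (z, t)).hasFDerivAt
      have h2 : HasDerivAt (fun y : ℝ => (y, t)) ((1 : ℝ), (0 : ℝ)) z :=
        (hasDerivAt_id z).prodMk (hasDerivAt_const z t)
      exact h.comp_hasDerivAt z h2
    have hvt : HasDerivAt (fun s => v x s)
        (fderiv ℝ (uncurry u) (z, t) (0, 1) - c t * fderiv ℝ (uncurry u) (z, t) (1, 0)) t := by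
      have hinner : HasDerivAt (fun s => (x - a s, s)) ((-(c t) : ℝ), (1 : ℝ)) t := by
        have := ((hasDerivAt_const t x).sub (ha' t)).prodMk (hasDerivAt_id t)
        simpa using this
      have h := (hsmooth.differentiable (by simp)
        (x - a t, t)).hasFDerivAt
      have hcomp := h.comp_hasDerivAt_of_eq t hinner rfl
      have heq : (fun s => v x s) = fun s => uncurry u (x - a s, s) := by
        funext s; rw [hvu]; rfl
      rw [heq]
      refine hcomp.congr_deriv ?_
      have hpt : ((-(c t) : ℝ), (1 : ℝ)) = (-(c t)) • ((1:ℝ), (0:ℝ)) + ((0:ℝ), (1:ℝ)) := by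
        norm_num [Prod.ext_iff]
      rw [hpt, map_add, ContinuousLinearMap.map_smul]
      simp only [← hb, ← hz, smul_eq_mul]
      ring
    -- assemble
    have hue : v x t = u z t := by rw [hvu x t, hz, hb]
    rw [hvt.deriv, hshift 3, hderivx, hue, hmean t]
    have hp := hPDE z t
    rw [hut.deriv, hux.deriv] at hp
    rw [hux.deriv]
    linear_combination hp
end
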